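/- arXiv:1911.10061 — 5 statements merged into one kernel-verified Lean document; each statement's English description precedes it below -/
import Mathlib

section
/- Let d ≥ 3 and k ≥ 1 be integers, let E be a real inner product space of dimension d + k equipped with its Lebesgue (Haar) measure, let F ⊆ E be a d-dimensional subspace and P the orthogonal projection of E onto F. Let c, ν, A > 0 and let V : F → ℝ be measurable with |V(q)| ≤ c|q|^{−2−ν} for all q ∈ F with |q| ≥ A, and such that q ↦ (1+|q|)V(q)·𝟙_{{|q| < A}}(q) belongs to L²(F). Let φ : E → ℝ be measurable such that for every 0 ≤ α < (d+k−2)/2 the function x ↦ (1+|Px|)^{−1}(1+|x|)^α φ(x) belongs to L²(E). Then for every γ with 0 < γ < min{d/2 − 1, ν}, the function x ↦ (1+|x|)^γ V(Px) φ(x) belongs to L¹(E). -/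
open MeasureTheory Measure Set Module
open scoped ENNReal

lemma aux_rpow_neg_le {u v C s : ℝ} (hu : 0 < u) (hv : 0 < v) (hC : 0 < C)
    (h : v ≤ C * u) (hs : 0 ≤ s) : u ^ (-s) ≤ C ^ s * v ^ (-s) := by
  have h1 : v ^ s ≤ C ^ s * u ^ s := by
    calc v ^ s ≤ (C * u) ^ s := Real.rpow_le_rpow hv.le h hs
    _ = C ^ s * u ^ s := Real.mul_rpow hC.le hu.le
  have hus : (0:ℝ) < u ^ s := Real.rpow_pos_of_pos hu s
  have hvs : (0:ℝ) < v ^ s := Real.rpow_pos_of_pos hv s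
  rw [Real.rpow_neg hu.le, Real.rpow_neg hv.le, inv_eq_one_div, inv_eq_one_div, mul_one_div,
    div_le_div_iff₀ hus hvs]
  nlinarith

lemma aux_split_rpow {a b s t : ℝ} (ha : 0 ≤ a) (hb : 0 ≤ b) (ht : 0 ≤ t) (hts : t ≤ s) :
    (1 + a + b) ^ (-s) ≤ (1 + a) ^ (-(s - t)) * (1 + b) ^ (-t) := by
  have h1 : (0:ℝ) < 1 + a := by linarith
  have h2 : (0:ℝ) < 1 + b := by linarith
  have h3 : (0:ℝ) < 1 + a + b := by linarith
  rw [Real.rpow_neg h1.le, Real.rpow_neg h2.le, Real.rpow_neg h3.le, ← mul_inv]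
  have key : (1+a)^(s-t) * (1+b)^t ≤ (1+a+b)^s := by
    calc (1+a)^(s-t) * (1+b)^t ≤ (1+a+b)^(s-t) * (1+a+b)^t :=
          mul_le_mul (Real.rpow_le_rpow h1.le (by linarith) (by linarith))
            (Real.rpow_le_rpow h2.le (by linarith) ht) (by positivity) (by positivity)
      _ = (1+a+b)^s := by rw [← Real.rpow_add h3]; ring_nf
  exact inv_anti₀ (by positivity) key

lemma aux_mul_L1 {α : Type*} [MeasurableSpace α] {μ : Measure α} {f g h : α → ℝ}
    (hf : Integrable (fun x => f x ^ 2) μ) (hg : Integrable (fun x => g x ^ 2) μ)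
    (hmeas : AEStronglyMeasurable h μ) (heq : ∀ x, h x = f x * g x) :
    Integrable h μ := by
  refine Integrable.mono' ((hf.add hg).div_const 2) hmeas (Filter.Eventually.of_forall ?_)
  intro x
  rw [heq x, Real.norm_eq_abs, abs_mul]
  simp only [Pi.add_apply]
  nlinarith [sq_nonneg (|f x| - |g x|), sq_abs (f x), sq_abs (g x),
    abs_nonneg (f x), abs_nonneg (g x)]

lemma aux_pointwise {a b x v γ α s t : ℝ} (ha : 0 ≤ a) (hb : 0 ≤ b) (hx : 0 ≤ x)
    (hsq : x^2 = a^2 + b^2) (ht0 : 0 ≤ t) (hts : t ≤ s) (hs : s = 2*(α - γ)) :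
    ((1+x)^(γ-α) * v * (1+a))^2 ≤
      (2^s * ((1+a)^2 * v^2 * (1+a)^(-(s-t)))) * (1+b)^(-t) := by
  have hs0 : 0 ≤ s := le_trans ht0 hts
  have hx0 : (0:ℝ) < 1 + x := by linarith
  have hab : a + b ≤ 2 * x := by nlinarith [sq_nonneg (a - b), sq_nonneg (a + b - 2*x)]
  have e1 : ((1+x)^(γ-α))^2 = (1+x)^(-s) := by
    rw [← Real.rpow_natCast ((1+x)^(γ-α)) 2, ← Real.rpow_mul hx0.le]
    congr 1
    push_cast
    rw [hs]; ring
  have e2 : (1+x)^(-s) ≤ 2^s * (1+a+b)^(-s) := by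
    apply aux_rpow_neg_le hx0 (by linarith) two_pos _ hs0
    linarith
  have e3 : (1+a+b)^(-s) ≤ (1+a)^(-(s-t)) * (1+b)^(-t) := aux_split_rpow ha hb ht0 hts
  have h5 : ((1+x)^(γ-α))^2 ≤ 2^s * ((1+a)^(-(s-t)) * (1+b)^(-t)) := by
    calc ((1+x)^(γ-α))^2 = (1+x)^(-s) := e1
      _ ≤ 2^s * (1+a+b)^(-s) := e2
      _ ≤ 2^s * ((1+a)^(-(s-t)) * (1+b)^(-t)) :=
          mul_le_mul_of_nonneg_left e3 (by positivity)
  calc ((1+x)^(γ-α) * v * (1+a))^2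
      = (v^2 * (1+a)^2) * ((1+x)^(γ-α))^2 := by ring
    _ ≤ (v^2 * (1+a)^2) * (2^s * ((1+a)^(-(s-t)) * (1+b)^(-t))) :=
        mul_le_mul_of_nonneg_left h5 (by positivity)
    _ = (2^s * ((1+a)^2 * v^2 * (1+a)^(-(s-t)))) * (1+b)^(-t) := by ring

lemma aux_w_integrable {F : Type*} [NormedAddCommGroup F] [NormedSpace ℝ F]
    [FiniteDimensional ℝ F] [MeasurableSpace F] [BorelSpace F]
    (μF : Measure F) [μF.IsAddHaarMeasure]
    (c ν A : ℝ) (hc : 0 < c) (hν : 0 < ν) (hA : 0 < A)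
    (V : F → ℝ) (hVmeas : Measurable V)
    (hVdecay : ∀ q : F, A ≤ ‖q‖ → |V q| ≤ c * ‖q‖ ^ (-(2 + ν)))
    (hVloc : MemLp ({q : F | ‖q‖ < A}.indicator fun q => (1 + ‖q‖) * V q) 2 μF)
    (u : ℝ) (hu0 : 0 ≤ u) (hud : (finrank ℝ F : ℝ) < 2 + 2*ν + u) :
    Integrable (fun q : F => (1 + ‖q‖)^2 * V q^2 * (1 + ‖q‖) ^ (-u)) μF := by
  have hbF : ∀ q : F, (0:ℝ) < 1 + ‖q‖ := fun q => by positivity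
  set D : ℝ := c^2 * ((1+A)/A) ^ (4 + 2*ν) with hD_def
  have hnear_int : Integrable
      (fun q : F => (({q : F | ‖q‖ < A}.indicator fun q => (1 + ‖q‖) * V q) q)^2) μF :=
    (memLp_two_iff_integrable_sq hVloc.1).mp hVloc
  have hfar_int : Integrable (fun q : F => D * (1 + ‖q‖) ^ (-(2 + 2*ν + u))) μF :=
    (integrable_one_add_norm hud).const_mul D
  have hwmeas : Measurable fun q : F => (1 + ‖q‖)^2 * V q^2 * (1 + ‖q‖) ^ (-u) := by
    refine (((measurable_const.add measurable_norm).pow_const 2).mul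
      (hVmeas.pow_const 2)).mul ?_
    exact ((continuous_const.add continuous_norm).rpow_const
      (fun q => Or.inl (by positivity : (1:ℝ) + ‖q‖ ≠ 0))).measurable
  refine (hnear_int.add hfar_int).mono' hwmeas.aestronglyMeasurable
    (Filter.Eventually.of_forall fun q => ?_)
  rw [Real.norm_eq_abs, abs_of_nonneg (by positivity)]
  simp only [Pi.add_apply]
  rcases lt_or_ge ‖q‖ A with hq | hq
  · have h1 : (({q : F | ‖q‖ < A}.indicator fun q => (1 + ‖q‖) * V q) q)^2
        = ((1 + ‖q‖) * V q)^2 := by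
      rw [Set.indicator_of_mem (show q ∈ {q : F | ‖q‖ < A} from hq)]
    have h2 : (1 + ‖q‖) ^ (-u) ≤ 1 :=
      Real.rpow_le_one_of_one_le_of_nonpos (by linarith [norm_nonneg q]) (by linarith)
    have h3 : (0:ℝ) ≤ D * (1 + ‖q‖) ^ (-(2 + 2*ν + u)) := by positivity
    have h4 : (1 + ‖q‖)^2 * V q^2 * (1 + ‖q‖) ^ (-u) ≤ (1 + ‖q‖)^2 * V q^2 :=
      mul_le_of_le_one_right (by positivity) h2
    have h5 : ((1 + ‖q‖) * V q)^2 = (1 + ‖q‖)^2 * V q^2 := mul_pow _ _ _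
    linarith
  · have hq0 : (0:ℝ) < ‖q‖ := lt_of_lt_of_le hA hq
    have hnear0 : (({q : F | ‖q‖ < A}.indicator fun q => (1 + ‖q‖) * V q) q)^2 = 0 := by
      rw [Set.indicator_of_notMem (show q ∉ {q : F | ‖q‖ < A} from not_lt.mpr hq)]
      norm_num
    have hV2 : V q^2 ≤ c^2 * (‖q‖ ^ (-(2 + ν)))^2 := by
      have h' : |V q|^2 ≤ (c * ‖q‖ ^ (-(2 + ν)))^2 :=
        pow_le_pow_left₀ (abs_nonneg _) (hVdecay q hq) 2
      rw [sq_abs] at h'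
      calc V q^2 ≤ (c * ‖q‖ ^ (-(2 + ν)))^2 := h'
        _ = c^2 * (‖q‖ ^ (-(2 + ν)))^2 := mul_pow _ _ _
    have hrw : (‖q‖ ^ (-(2 + ν)))^2 = ‖q‖ ^ (-(4 + 2*ν)) := by
      rw [← Real.rpow_natCast (‖q‖ ^ (-(2 + ν))) 2, ← Real.rpow_mul hq0.le]
      congr 1
      push_cast; ring
    have hcA : (1:ℝ) + ‖q‖ ≤ ((1+A)/A) * ‖q‖ := by
      rw [div_mul_eq_mul_div, le_div_iff₀ hA]
      nlinarith
    have hbound : ‖q‖ ^ (-(4 + 2*ν)) ≤ ((1+A)/A) ^ (4 + 2*ν) * (1 + ‖q‖) ^ (-(4 + 2*ν)) :=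
      aux_rpow_neg_le hq0 (hbF q) (by positivity) hcA (by linarith)
    have hVq : V q^2 ≤ c^2 * (((1+A)/A) ^ (4 + 2*ν) * (1 + ‖q‖) ^ (-(4 + 2*ν))) := by
      calc V q^2 ≤ c^2 * (‖q‖ ^ (-(2 + ν)))^2 := hV2
        _ = c^2 * ‖q‖ ^ (-(4 + 2*ν)) := by rw [hrw]
        _ ≤ c^2 * (((1+A)/A) ^ (4 + 2*ν) * (1 + ‖q‖) ^ (-(4 + 2*ν))) :=
            mul_le_mul_of_nonneg_left hbound (by positivity)
    have hcomb : (1 + ‖q‖) ^ ((2:ℕ):ℝ) * ((1 + ‖q‖) ^ (-(4 + 2*ν)) *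
        (1 + ‖q‖) ^ (-u)) = (1 + ‖q‖) ^ (-(2 + 2*ν + u)) := by
      rw [← Real.rpow_add (hbF q), ← Real.rpow_add (hbF q)]
      congr 1
      push_cast; ring
    have hmain : (1 + ‖q‖)^2 * V q^2 * (1 + ‖q‖) ^ (-u) ≤
        D * (1 + ‖q‖) ^ (-(2 + 2*ν + u)) := by
      rw [hD_def]
      calc (1 + ‖q‖)^2 * V q^2 * (1 + ‖q‖) ^ (-u)
          ≤ (1 + ‖q‖)^2 * (c^2 * (((1+A)/A) ^ (4 + 2*ν) * (1 + ‖q‖) ^ (-(4 + 2*ν)))) *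
            (1 + ‖q‖) ^ (-u) :=
            mul_le_mul_of_nonneg_right
              (mul_le_mul_of_nonneg_left hVq (by positivity)) (by positivity)
        _ = c^2 * ((1+A)/A) ^ (4 + 2*ν) *
            ((1 + ‖q‖) ^ ((2:ℕ):ℝ) * ((1 + ‖q‖) ^ (-(4 + 2*ν)) * (1 + ‖q‖) ^ (-u))) := by
            rw [Real.rpow_natCast]; ring
        _ = c^2 * ((1+A)/A) ^ (4 + 2*ν) * (1 + ‖q‖) ^ (-(2 + 2*ν + u)) := by rw [hcomb]
    linarith

/-- Proposition 1 of the paper, abstract form: `E` a real inner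
product space of dimension `d + k` (`d ≥ 3`, `k ≥ 1`) with Haar measure `μ`, `F ⊆ E`
a `d`-dimensional subspace with orthogonal projection `P` and Haar measure `μF`;
`V : F → ℝ` measurable with `|V(q)| ≤ c|q|^{-2-ν}` for `|q| ≥ A` and
`(1+|q|)V(q)𝟙_{|q|<A} ∈ L²(F)`; `φ : E → ℝ` measurable with
`(1+|Px|)⁻¹(1+|x|)^α φ ∈ L²(E)` for all `0 ≤ α < (d+k-2)/2`.  Then
`(1+|x|)^γ V(Px) φ(x) ∈ L¹(E)` for every `0 < γ < min{d/2 - 1, ν}`. -/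
theorem weighted_L1_pair_potential
    {E : Type*} [NormedAddCommGroup E] [InnerProductSpace ℝ E]
    [FiniteDimensional ℝ E] [MeasurableSpace E] [BorelSpace E]
    (d k : ℕ) (hd : 3 ≤ d) (hk : 1 ≤ k) (hdim : Module.finrank ℝ E = d + k)
    (F : Submodule ℝ E) (hF : Module.finrank ℝ F = d)
    [MeasurableSpace F] [BorelSpace F]
    (μ : Measure E) [μ.IsAddHaarMeasure]
    (μF : Measure F) [μF.IsAddHaarMeasure]
    (c ν A : ℝ) (hc : 0 < c) (hν : 0 < ν) (hA : 0 < A)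
    (V : F → ℝ) (hVmeas : Measurable V)
    (hVdecay : ∀ q : F, A ≤ ‖q‖ → |V q| ≤ c * ‖q‖ ^ (-(2 + ν)))
    (hVloc : MemLp ({q : F | ‖q‖ < A}.indicator fun q => (1 + ‖q‖) * V q) 2 μF)
    (φ : E → ℝ) (hφmeas : Measurable φ)
    (hφ : ∀ α : ℝ, 0 ≤ α → α < ((d : ℝ) + (k : ℝ) - 2) / 2 →
      MemLp (fun x : E =>
          (1 + ‖(F.orthogonalProjectionOnto x : E)‖)⁻¹ * (1 + ‖x‖) ^ α * φ x) 2 μ) :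
    ∀ γ : ℝ, 0 < γ → γ < min ((d : ℝ) / 2 - 1) ν →
      Integrable (fun x : E =>
        (1 + ‖x‖) ^ γ * V (F.orthogonalProjectionOnto x) * φ x) μ := by
  intro γ hγ0 hγm
  obtain ⟨hγd, hγν⟩ := lt_min_iff.mp hγm
  have hd3 : (3:ℝ) ≤ (d:ℝ) := by exact_mod_cast hd
  have hk1 : (1:ℝ) ≤ (k:ℝ) := by exact_mod_cast hk
  -- choice of constants
  set m : ℝ := min (ν - γ) ((d:ℝ)/2 - 1 - γ) with hm_def
  have hm : 0 < m := lt_min (by linarith) (by linarith)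
  have hmν : m ≤ ν - γ := min_le_left _ _
  have hmd : m ≤ (d:ℝ)/2 - 1 - γ := min_le_right _ _
  set η : ℝ := min m 1 / 2 with hη_def
  have hη0 : 0 < η := by
    have := lt_min hm one_pos; rw [hη_def]; linarith
  have hη2m : 2 * η ≤ m := by
    have := min_le_left m 1; rw [hη_def]; linarith
  have hηhalf : η ≤ 1/2 := by
    have := min_le_right m 1; rw [hη_def]; linarith
  set α : ℝ := ((d:ℝ) + (k:ℝ) - 2 - η) / 2 with hα_def
  set s : ℝ := 2 * (α - γ) with hs_def
  set t : ℝ := (k:ℝ) + η with ht_def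
  have hα0 : 0 ≤ α := by rw [hα_def]; linarith
  have hα2 : α < ((d:ℝ) + (k:ℝ) - 2) / 2 := by rw [hα_def]; linarith
  have ht0 : 0 ≤ t := by rw [ht_def]; linarith
  have htk : (k:ℝ) < t := by rw [ht_def]; linarith
  have hts : t ≤ s := by rw [ht_def, hs_def, hα_def]; linarith
  have hs0 : 0 ≤ s := le_trans ht0 hts
  have hrd : (d:ℝ) < 2 + 2*ν + (s - t) := by rw [hs_def, ht_def, hα_def]; linarith
  -- the two L² functions
  set Gf : E → ℝ := fun x =>
    (1 + ‖x‖) ^ (γ - α) * V (F.orthogonalProjectionOnto x) *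
      (1 + ‖(F.orthogonalProjectionOnto x : E)‖) with hGf_def
  set Hf : E → ℝ := fun x =>
    (1 + ‖(F.orthogonalProjectionOnto x : E)‖)⁻¹ * (1 + ‖x‖) ^ α * φ x with hHf_def
  -- measurability bits
  have hPmeas : Measurable fun x : E => (F.orthogonalProjectionOnto x : F) :=
    (F.orthogonalProjectionOnto).continuous.measurable
  have hPEmeas : Measurable fun x : E => ((F.orthogonalProjectionOnto x : F) : E) :=
    (continuous_subtype_val.comp (F.orthogonalProjectionOnto).continuous).measurable
  have hrpowE : ∀ b : ℝ, Measurable fun x : E => (1 + ‖x‖) ^ b := by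
    intro b
    exact ((continuous_const.add continuous_norm).rpow_const
      (fun x => Or.inl (by positivity : (1:ℝ) + ‖x‖ ≠ 0))).measurable
  have hGmeas : Measurable Gf := by
    rw [hGf_def]
    exact ((hrpowE (γ - α)).mul (hVmeas.comp hPmeas)).mul
      (measurable_const.add hPEmeas.norm)
  -- the measure-theoretic setup on F × Fᗮ
  letI : MeasurableSpace Fᗮ := borel Fᗮ
  haveI : BorelSpace Fᗮ := ⟨rfl⟩
  set μK : Measure Fᗮ := addHaar with hμK
  haveI : (μF.prod μK).IsAddHaarMeasure := Measure.prod.instIsAddHaarMeasure _ _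
  have hcompl : IsCompl F Fᗮ := Submodule.isCompl_orthogonal_of_hasOrthogonalProjection
  set e := (Submodule.prodEquivOfIsCompl F Fᗮ hcompl).toContinuousLinearEquiv with he_def
  set ρ : Measure E := (μF.prod μK).map e with hρ
  haveI : ρ.IsAddHaarMeasure := e.isAddHaarMeasure_map (μF.prod μK)
  have hμρ : μ = addHaarScalarFactor μ ρ • ρ := isAddLeftInvariant_eq_smul μ ρ
  have hmape : ∀ p : F × Fᗮ, e p = (p.1 : E) + (p.2 : E) := fun p => rfl
  have hP : ∀ p : F × Fᗮ, F.orthogonalProjectionOnto (e p) = p.1 := by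
    intro p
    rw [hmape, _root_.map_add, Submodule.orthogonalProjectionOnto_mem_subspace_eq_self,
      Submodule.orthogonalProjectionOnto_apply_of_mem_orthogonal p.2.2, add_zero]
  have hKrank : (finrank ℝ Fᗮ : ℝ) = (k : ℝ) := by
    have h := Submodule.finrank_add_finrank_orthogonal (K := F)
    rw [hF, hdim] at h
    have : finrank ℝ Fᗮ = k := by omega
    exact_mod_cast this
  -- integrability of the F-side weight
  have hw_int : Integrable (fun q : F => (1 + ‖q‖)^2 * V q^2 * (1 + ‖q‖) ^ (-(s-t))) μF := by
    apply aux_w_integrable μF c ν A hc hν hA V hVmeas hVdecay hVloc (s-t) (by linarith)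
    rw [hF]; exact hrd
  have hwmeas : Measurable (fun q : F => (1 + ‖q‖)^2 * V q^2 * (1 + ‖q‖) ^ (-(s-t))) := by
    refine (((measurable_const.add measurable_norm).pow_const 2).mul
      (hVmeas.pow_const 2)).mul ?_
    exact ((continuous_const.add continuous_norm).rpow_const
      (fun q => Or.inl (by positivity : (1:ℝ) + ‖q‖ ≠ 0))).measurable
  have hK_int : Integrable (fun y : Fᗮ => (1 + ‖y‖) ^ (-t)) μK := by
    apply integrable_one_add_norm
    rw [hKrank]; exact htk
  -- pointwise bound for the composed function
  have hpoint : ∀ p : F × Fᗮ,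
      ENNReal.ofReal (Gf (e p)^2) ≤
        ENNReal.ofReal (2 ^ s * ((1 + ‖p.1‖)^2 * V p.1^2 * (1 + ‖p.1‖) ^ (-(s-t)))) *
          ENNReal.ofReal ((1 + ‖p.2‖) ^ (-t)) := by
    intro p
    obtain ⟨q, y⟩ := p
    rw [← ENNReal.ofReal_mul (by positivity)]
    apply ENNReal.ofReal_le_ofReal
    have hinner : inner ℝ (q:E) (y:E) = 0 :=
      Submodule.inner_right_of_mem_orthogonal q.2 y.2
    have hsq : ‖(q:E) + (y:E)‖^2 = ‖q‖^2 + ‖y‖^2 := by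
      rw [@norm_add_sq_real E, hinner]
      simp [Submodule.coe_norm]
    have hGval : Gf (e (q, y)) =
        (1 + ‖(q:E) + (y:E)‖) ^ (γ - α) * V q * (1 + ‖q‖) := by
      rw [hGf_def]
      simp only
      rw [hP (q, y), hmape (q, y)]
      simp [Submodule.coe_norm]
    rw [hGval]
    exact aux_pointwise (norm_nonneg q) (norm_nonneg y)
      (norm_nonneg ((q:E) + (y:E))) hsq ht0 hts hs_def
  -- `Gf` is square integrable
  have hG2 : Integrable (fun x => Gf x^2) μ := by
    constructor
    · exact (hGmeas.pow_const 2).aestronglyMeasurable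
    · have h0 : ∫⁻ x, ‖Gf x^2‖ₑ ∂μ = ∫⁻ x, ENNReal.ofReal (Gf x^2) ∂μ :=
        lintegral_enorm_of_nonneg fun x => sq_nonneg _
      rw [HasFiniteIntegral, h0]
      have hfmeas : Measurable fun x : E => ENNReal.ofReal (Gf x^2) :=
        ENNReal.measurable_ofReal.comp (hGmeas.pow_const 2)
      have h1 : ∫⁻ x, ENNReal.ofReal (Gf x^2) ∂μ =
          (addHaarScalarFactor μ ρ : ℝ≥0∞) * ∫⁻ x, ENNReal.ofReal (Gf x^2) ∂ρ := by
        conv_lhs => rw [hμρ]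
        rw [ENNReal.smul_def, lintegral_smul_measure, smul_eq_mul]
      have h2 : ∫⁻ x, ENNReal.ofReal (Gf x^2) ∂ρ =
          ∫⁻ p : F × Fᗮ, ENNReal.ofReal (Gf (e p)^2) ∂(μF.prod μK) :=
        lintegral_map hfmeas e.continuous.measurable
      have h3 : ∫⁻ p : F × Fᗮ, ENNReal.ofReal (Gf (e p)^2) ∂(μF.prod μK) ≤
          (∫⁻ q : F, ENNReal.ofReal
              (2 ^ s * ((1 + ‖q‖)^2 * V q^2 * (1 + ‖q‖) ^ (-(s-t)))) ∂μF) *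
            ∫⁻ y : Fᗮ, ENNReal.ofReal ((1 + ‖y‖) ^ (-t)) ∂μK := by
        have hfa : AEMeasurable (fun q : F => ENNReal.ofReal
            (2 ^ s * ((1 + ‖q‖)^2 * V q^2 * (1 + ‖q‖) ^ (-(s-t))))) μF :=
          (hwmeas.const_mul _).ennreal_ofReal.aemeasurable
        have hga : AEMeasurable (fun y : Fᗮ => ENNReal.ofReal ((1 + ‖y‖) ^ (-t))) μK :=
          (((continuous_const.add continuous_norm).rpow_const
            (fun y => Or.inl (by positivity : (1:ℝ) + ‖y‖ ≠ 0))).measurable).ennreal_ofReal.aemeasurable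
        calc ∫⁻ p : F × Fᗮ, ENNReal.ofReal (Gf (e p)^2) ∂(μF.prod μK)
            ≤ ∫⁻ p : F × Fᗮ, (fun q : F => ENNReal.ofReal
                (2 ^ s * ((1 + ‖q‖)^2 * V q^2 * (1 + ‖q‖) ^ (-(s-t))))) p.1 *
                (fun y : Fᗮ => ENNReal.ofReal ((1 + ‖y‖) ^ (-t))) p.2 ∂(μF.prod μK) :=
              lintegral_mono hpoint
          _ = _ := lintegral_prod_mul hfa hga
      have h4 : (∫⁻ q : F, ENNReal.ofReal
          (2 ^ s * ((1 + ‖q‖)^2 * V q^2 * (1 + ‖q‖) ^ (-(s-t)))) ∂μF) < ∞ :=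
        (hw_int.const_mul _).lintegral_lt_top
      have h5 : (∫⁻ y : Fᗮ, ENNReal.ofReal ((1 + ‖y‖) ^ (-t)) ∂μK) < ∞ :=
        hK_int.lintegral_lt_top
      rw [h1, h2]
      exact ENNReal.mul_lt_top ENNReal.coe_lt_top (lt_of_le_of_lt h3
        (ENNReal.mul_lt_top h4 h5))
  -- `Hf` is square integrable
  have hH : MemLp Hf 2 μ := hφ α hα0 hα2
  have hH2 : Integrable (fun x => Hf x^2) μ := (memLp_two_iff_integrable_sq hH.1).mp hH
  -- conclude
  apply aux_mul_L1 hG2 hH2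
  · exact (((hrpowE γ).mul (hVmeas.comp hPmeas)).mul hφmeas).aestronglyMeasurable
  · intro x
    have h1 : (0:ℝ) < 1 + ‖(F.orthogonalProjectionOnto x : E)‖ := by positivity
    have h2 : (1 + ‖x‖) ^ (γ - α) * (1 + ‖x‖) ^ α = (1 + ‖x‖) ^ γ := by
      rw [← Real.rpow_add (by positivity)]; ring_nf
    rw [hGf_def, hHf_def]
    simp only
    calc (1 + ‖x‖) ^ γ * V (F.orthogonalProjectionOnto x) * φ x
        = ((1 + ‖x‖) ^ (γ - α) * (1 + ‖x‖) ^ α) * V (F.orthogonalProjectionOnto x) * φ x *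
          ((1 + ‖(F.orthogonalProjectionOnto x : E)‖) *
            (1 + ‖(F.orthogonalProjectionOnto x : E)‖)⁻¹) := by
          rw [h2, mul_inv_cancel₀ h1.ne', mul_one]
      _ = (1 + ‖x‖) ^ (γ - α) * V (F.orthogonalProjectionOnto x) *
            (1 + ‖(F.orthogonalProjectionOnto x : E)‖) *
          ((1 + ‖(F.orthogonalProjectionOnto x : E)‖)⁻¹ * (1 + ‖x‖) ^ α * φ x) := by ring
end

section
/- Let n ≥ 3 and β = n − 2, let 0 < η < 1, and let F ∈ L¹(ℝⁿ). For x ∈ ℝⁿ let Ω₂(x) = {y : |x−y| > 1 and |y| ≤ |x|^η}. Then there exists R ≥ 1 such that the function h(x) = (∫_{Ω₂(x)} |x−y|^{−β} F(y) dy − |x|^{−β} ∫_{Ω₂(x)} F(y) dy) · 𝟙_{{|x| ≥ R}}(x) belongs to L^p(ℝⁿ) for every p > n/(n − 1 − η). -/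
open MeasureTheory Set

section AuxLemmas

variable {E : Type*} [NormedAddCommGroup E] [MeasurableSpace E] [BorelSpace E]
  {μ : Measure E} [SigmaFinite μ]

/-- Strong measurability of a parametrized set integral over sections of a measurable set. -/
private lemma sm_integral_section {S : Set (E × E)} (hS : MeasurableSet S)
    {φ : E × E → ℝ} (hφ : Measurable φ) :
    StronglyMeasurable (fun x => ∫ y in {y | (x, y) ∈ S}, φ (x, y) ∂μ) := by
  have h := ((hφ.indicator hS).stronglyMeasurable).integral_prod_right' (ν := μ)
  have heq : (fun x => ∫ y in {y | (x, y) ∈ S}, φ (x, y) ∂μ)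
      = fun x => ∫ y, S.indicator φ (x, y) ∂μ := by
    funext x
    rw [show {y | (x, y) ∈ S} = Prod.mk x ⁻¹' S from rfl,
      ← integral_indicator (measurable_prodMk_left hS)]
    rfl
  rw [heq]
  exact h

/-- Mean value theorem bound for negative real powers. -/
private lemma rpow_neg_sub_abs_le {β c a b : ℝ} (hβ : 0 ≤ β) (hc : 0 < c)
    (ha : c ≤ a) (hb : c ≤ b) :
    |a ^ (-β) - b ^ (-β)| ≤ β * c ^ (-β - 1) * |a - b| := by
  have hderiv : ∀ t ∈ Set.Ici c, HasDerivWithinAt (fun t : ℝ => t ^ (-β))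
      (-β * t ^ (-β - 1)) (Set.Ici c) t := by
    intro t ht
    exact (Real.hasDerivAt_rpow_const (Or.inl (hc.trans_le ht).ne')).hasDerivWithinAt
  have hbound : ∀ t ∈ Set.Ici c, ‖-β * t ^ (-β - 1)‖ ≤ β * c ^ (-β - 1) := by
    intro t ht
    have ht0 : 0 < t := hc.trans_le ht
    have h1 : t ^ (-β - 1) ≤ c ^ (-β - 1) :=
      Real.rpow_le_rpow_of_nonpos hc ht (by linarith)
    have h2 : 0 ≤ t ^ (-β - 1) := Real.rpow_nonneg ht0.le _
    rw [norm_mul, Real.norm_eq_abs, Real.norm_eq_abs, abs_neg, abs_of_nonneg hβ,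
      abs_of_nonneg h2]
    exact mul_le_mul_of_nonneg_left h1 hβ
  have := (convex_Ici c).norm_image_sub_le_of_norm_hasDerivWithin_le hderiv hbound hb ha
  simpa [Real.norm_eq_abs] using this

end AuxLemmas

private theorem riesz_aux
    (n : ℕ) (hn : 3 ≤ n) (η : ℝ) (hη0 : 0 < η) (hη1 : η < 1)
    (F : EuclideanSpace ℝ (Fin n) → ℝ) (hFm : StronglyMeasurable F) (hF : Integrable F) :
    ∃ R : ℝ, 1 ≤ R ∧
      ∀ p : ℝ, (n : ℝ) / ((n : ℝ) - 1 - η) < p →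
        MemLp
          ({x : EuclideanSpace ℝ (Fin n) | R ≤ ‖x‖}.indicator fun x =>
            (∫ y in {y : EuclideanSpace ℝ (Fin n) | 1 < ‖x - y‖ ∧ ‖y‖ ≤ ‖x‖ ^ η},
                ‖x - y‖ ^ (-((n : ℝ) - 2)) * F y) -
              ‖x‖ ^ (-((n : ℝ) - 2)) *
                ∫ y in {y : EuclideanSpace ℝ (Fin n) | 1 < ‖x - y‖ ∧ ‖y‖ ≤ ‖x‖ ^ η}, F y)
          (ENNReal.ofReal p) := by
  classical
  set β : ℝ := (n : ℝ) - 2 with hβdef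
  have hn3 : (3 : ℝ) ≤ (n : ℝ) := by exact_mod_cast hn
  have hβ1 : 1 ≤ β := by simp only [hβdef]; linarith
  have hβ0 : 0 ≤ β := by linarith
  set κ : ℝ := β + 1 - η with hκdef
  have hκ0 : 0 < κ := by simp only [hκdef]; linarith
  -- the radius
  set R : ℝ := 2 ^ ((1:ℝ) / (1 - η)) + 2 with hRdef
  have h2pos : (0:ℝ) < 2 ^ ((1:ℝ) / (1 - η)) := Real.rpow_pos_of_pos (by norm_num) _
  refine ⟨R, by simp only [hRdef]; linarith, ?_⟩
  intro p hp
  -- basic facts about `p`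
  have hκn : κ = (n : ℝ) - 1 - η := by simp only [hκdef, hβdef]; ring
  have hnp : (n : ℝ) / κ < p := by rwa [hκn]
  have hp0 : 0 < p := lt_of_le_of_lt (by positivity) hnp
  have hκp : (n : ℝ) < κ * p := by
    have := (div_lt_iff₀ hκ0).mp hnp
    linarith
  -- abbreviations
  set Ω : EuclideanSpace ℝ (Fin n) → Set (EuclideanSpace ℝ (Fin n)) :=
    fun x => {y | 1 < ‖x - y‖ ∧ ‖y‖ ≤ ‖x‖ ^ η} with hΩdef
  set A : EuclideanSpace ℝ (Fin n) → ℝ := fun x =>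
    (∫ y in Ω x, ‖x - y‖ ^ (-β) * F y) - ‖x‖ ^ (-β) * ∫ y in Ω x, F y with hAdef
  -- measurability of `Ω x`
  have hΩmeas : ∀ x, MeasurableSet (Ω x) := by
    intro x
    have : Ω x = {y : EuclideanSpace ℝ (Fin n) | 1 < ‖x - y‖} ∩
        {y : EuclideanSpace ℝ (Fin n) | ‖y‖ ≤ ‖x‖ ^ η} := by
      ext y; simp [hΩdef]
    rw [this]
    exact (measurableSet_lt measurable_const
        ((measurable_const.sub measurable_id).norm)).inter
      (measurableSet_le measurable_norm measurable_const)
  -- strong measurability of `A`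
  have hS : MeasurableSet {q : EuclideanSpace ℝ (Fin n) × EuclideanSpace ℝ (Fin n) |
      1 < ‖q.1 - q.2‖ ∧ ‖q.2‖ ≤ ‖q.1‖ ^ η} := by
    have : {q : EuclideanSpace ℝ (Fin n) × EuclideanSpace ℝ (Fin n) |
          1 < ‖q.1 - q.2‖ ∧ ‖q.2‖ ≤ ‖q.1‖ ^ η}
        = {q : EuclideanSpace ℝ (Fin n) × EuclideanSpace ℝ (Fin n) | 1 < ‖q.1 - q.2‖} ∩
          {q : EuclideanSpace ℝ (Fin n) × EuclideanSpace ℝ (Fin n) | ‖q.2‖ ≤ ‖q.1‖ ^ η} := by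
      ext q; simp
    rw [this]
    exact (measurableSet_lt measurable_const
        ((measurable_fst.sub measurable_snd).norm)).inter
      (measurableSet_le measurable_snd.norm (measurable_fst.norm.pow measurable_const))
  have hI₁ : StronglyMeasurable (fun x => ∫ y in Ω x, ‖x - y‖ ^ (-β) * F y) := by
    have hφ : Measurable (fun q : EuclideanSpace ℝ (Fin n) × EuclideanSpace ℝ (Fin n) =>
        ‖q.1 - q.2‖ ^ (-β) * F q.2) :=
      ((measurable_fst.sub measurable_snd).norm.pow measurable_const).mul
        (hFm.measurable.comp measurable_snd)
    exact sm_integral_section hS hφ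
  have hI₂ : StronglyMeasurable (fun x => ∫ y in Ω x, F y) := by
    have hφ : Measurable (fun q : EuclideanSpace ℝ (Fin n) × EuclideanSpace ℝ (Fin n) =>
        F q.2) := hFm.measurable.comp measurable_snd
    exact sm_integral_section hS hφ
  have hAm : Measurable A := by
    apply hI₁.measurable.sub
    exact (measurable_norm.pow measurable_const).mul hI₂.measurable
  have hSR : MeasurableSet {x : EuclideanSpace ℝ (Fin n) | R ≤ ‖x‖} :=
    measurableSet_le measurable_const measurable_norm
  -- the constants
  set Cf : ℝ := ∫ y, ‖F y‖ with hCfdef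
  have hCf0 : 0 ≤ Cf := integral_nonneg fun y => norm_nonneg _
  set C : ℝ := β * 2 ^ (β + 1) * Cf * 2 ^ κ with hCdef
  have hC0 : 0 ≤ C := by
    have := Real.rpow_nonneg (by norm_num : (0:ℝ) ≤ 2) (β + 1)
    have := Real.rpow_nonneg (by norm_num : (0:ℝ) ≤ 2) κ
    positivity
  set G : EuclideanSpace ℝ (Fin n) → ℝ := fun x => C * (1 + ‖x‖) ^ (-κ) with hGdef
  -- the pointwise bound on the region
  have hbound : ∀ x, R ≤ ‖x‖ → ‖A x‖ ≤ G x := by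
    intro x hx
    have hx2 : 2 ≤ ‖x‖ := le_trans (by simp only [hRdef]; linarith) hx
    have hx0 : 0 < ‖x‖ := by linarith
    have hc0 : 0 < ‖x‖ / 2 := by linarith
    -- `‖x‖ ^ η ≤ ‖x‖ / 2`
    have hxpow : ‖x‖ ^ η ≤ ‖x‖ / 2 := by
      have hb : (2:ℝ) ≤ ‖x‖ ^ (1 - η) := by
        have h1 : ((2:ℝ) ^ ((1:ℝ) / (1 - η))) ^ (1 - η) = 2 := by
          rw [← Real.rpow_mul (by norm_num : (0:ℝ) ≤ 2),
            one_div_mul_cancel (by linarith : (1:ℝ) - η ≠ 0), Real.rpow_one]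
        calc (2:ℝ) = ((2:ℝ) ^ ((1:ℝ) / (1 - η))) ^ (1 - η) := h1.symm
          _ ≤ ‖x‖ ^ (1 - η) :=
            Real.rpow_le_rpow (le_of_lt h2pos)
              (le_trans (by simp only [hRdef]; linarith) hx) (by linarith)
      have h2 : ‖x‖ ^ η * 2 ≤ ‖x‖ ^ η * ‖x‖ ^ (1 - η) :=
        mul_le_mul_of_nonneg_left hb (Real.rpow_nonneg hx0.le _)
      have h3 : ‖x‖ ^ η * ‖x‖ ^ (1 - η) = ‖x‖ := by
        rw [← Real.rpow_add hx0]
        norm_num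
      rw [h3] at h2
      linarith
    -- integrability facts over `Ω x`
    have hΩx := hΩmeas x
    have hFon : IntegrableOn F (Ω x) := hF.integrableOn
    have hkm : AEStronglyMeasurable (fun y : EuclideanSpace ℝ (Fin n) => ‖x - y‖ ^ (-β) * F y)
        (volume.restrict (Ω x)) :=
      (((measurable_const.sub measurable_id).norm.pow measurable_const).mul
        hFm.measurable).aestronglyMeasurable.restrict
    have hkon : IntegrableOn (fun y : EuclideanSpace ℝ (Fin n) => ‖x - y‖ ^ (-β) * F y) (Ω x) := by
      refine Integrable.mono hFon.norm hkm ?_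
      refine (ae_restrict_iff' hΩx).2 (ae_of_all _ fun y hy => ?_)
      have h1 : ‖x - y‖ ^ (-β) ≤ 1 :=
        Real.rpow_le_one_of_one_le_of_nonpos hy.1.le (by linarith)
      have h2 : 0 ≤ ‖x - y‖ ^ (-β) := Real.rpow_nonneg (norm_nonneg _) _
      rw [norm_mul, norm_norm, Real.norm_eq_abs, abs_of_nonneg h2]
      calc ‖x - y‖ ^ (-β) * |F y| ≤ 1 * |F y| :=
            mul_le_mul_of_nonneg_right h1 (abs_nonneg _)
        _ = ‖F y‖ := by rw [one_mul, Real.norm_eq_abs]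
    have hcon : IntegrableOn (fun y : EuclideanSpace ℝ (Fin n) => ‖x‖ ^ (-β) * F y) (Ω x) :=
      hFon.const_mul _
    -- combine into one integral
    have hAx : A x = ∫ y in Ω x, (‖x - y‖ ^ (-β) - ‖x‖ ^ (-β)) * F y := by
      rw [hAdef]
      simp only
      rw [← integral_const_mul, ← integral_sub hkon hcon]
      congr 1
      funext y
      ring
    -- the kernel bound
    set D : ℝ := β * (‖x‖ / 2) ^ (-β - 1) * ‖x‖ ^ η with hDdef
    have hD0 : 0 ≤ D := by
      have := Real.rpow_nonneg hc0.le (-β - 1)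
      have := Real.rpow_nonneg hx0.le η
      positivity
    have hker : ∀ y ∈ Ω x, |‖x - y‖ ^ (-β) - ‖x‖ ^ (-β)| ≤ D := by
      intro y hy
      have hylb : ‖x‖ / 2 ≤ ‖x - y‖ := by
        have h1 : ‖x‖ - ‖y‖ ≤ ‖x - y‖ := norm_sub_norm_le x y
        have h2 : ‖y‖ ≤ ‖x‖ / 2 := le_trans hy.2 hxpow
        linarith
      have hxb : ‖x‖ / 2 ≤ ‖x‖ := by linarith
      have h1 := rpow_neg_sub_abs_le hβ0 hc0 hylb hxb
      have h2 : |‖x - y‖ - ‖x‖| ≤ ‖x‖ ^ η := by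
        have := abs_norm_sub_norm_le (x - y) x
        rw [sub_sub_cancel_left, norm_neg] at this
        exact le_trans this hy.2
      calc |‖x - y‖ ^ (-β) - ‖x‖ ^ (-β)|
          ≤ β * (‖x‖ / 2) ^ (-β - 1) * |‖x - y‖ - ‖x‖| := h1
        _ ≤ β * (‖x‖ / 2) ^ (-β - 1) * ‖x‖ ^ η := by
            apply mul_le_mul_of_nonneg_left h2
            have := Real.rpow_nonneg hc0.le (-β - 1)
            positivity
        _ = D := rfl
    -- bound the integral
    have hstep1 : ‖A x‖ ≤ ∫ y in Ω x, ‖(‖x - y‖ ^ (-β) - ‖x‖ ^ (-β)) * F y‖ := by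
      rw [hAx]; exact norm_integral_le_integral_norm _
    have hstep2 : (∫ y in Ω x, ‖(‖x - y‖ ^ (-β) - ‖x‖ ^ (-β)) * F y‖)
        ≤ ∫ y in Ω x, D * ‖F y‖ := by
      have hsub : IntegrableOn
          (fun y : EuclideanSpace ℝ (Fin n) => (‖x - y‖ ^ (-β) - ‖x‖ ^ (-β)) * F y) (Ω x) := by
        refine (hkon.sub hcon).congr (ae_of_all _ fun y => ?_)
        simp only [Pi.sub_apply]
        ring
      refine setIntegral_mono_on (hsub.norm) ((hFon.norm).const_mul D) hΩx ?_
      intro y hy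
      rw [norm_mul]
      exact mul_le_mul_of_nonneg_right (by simpa [Real.norm_eq_abs] using hker y hy)
        (norm_nonneg _)
    have hstep3 : (∫ y in Ω x, D * ‖F y‖) ≤ D * Cf := by
      rw [integral_const_mul]
      refine mul_le_mul_of_nonneg_left ?_ hD0
      exact setIntegral_le_integral hF.norm (ae_of_all _ fun y => norm_nonneg _)
    -- rewrite `D`
    have hhalf : (‖x‖ / 2) ^ (-β - 1) = ‖x‖ ^ (-β - 1) * 2 ^ (β + 1) := by
      rw [Real.div_rpow (norm_nonneg x) (by norm_num : (0:ℝ) ≤ 2), div_eq_mul_inv]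
      congr 1
      rw [show -β - 1 = -(β + 1) by ring, Real.rpow_neg (by norm_num : (0:ℝ) ≤ 2), inv_inv]
    have hDval : D = β * 2 ^ (β + 1) * ‖x‖ ^ (-κ) := by
      rw [hDdef, hhalf]
      have : ‖x‖ ^ (-β - 1) * ‖x‖ ^ η = ‖x‖ ^ (-κ) := by
        rw [← Real.rpow_add hx0]
        congr 1
        simp only [hκdef]; ring
      calc β * (‖x‖ ^ (-β - 1) * 2 ^ (β + 1)) * ‖x‖ ^ η
          = β * 2 ^ (β + 1) * (‖x‖ ^ (-β - 1) * ‖x‖ ^ η) := by ring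
        _ = β * 2 ^ (β + 1) * ‖x‖ ^ (-κ) := by rw [this]
    -- compare with the Japanese bracket
    have hjap : ‖x‖ ^ (-κ) ≤ 2 ^ κ * (1 + ‖x‖) ^ (-κ) := by
      have h2x : 1 + ‖x‖ ≤ 2 * ‖x‖ := by linarith
      have h1 : (2 * ‖x‖) ^ (-κ) ≤ (1 + ‖x‖) ^ (-κ) :=
        Real.rpow_le_rpow_of_nonpos (by linarith) h2x (by linarith)
      have h2 : (2 * ‖x‖) ^ (-κ) = 2 ^ (-κ) * ‖x‖ ^ (-κ) :=
        Real.mul_rpow (by norm_num) (norm_nonneg x)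
      have h3 : (2:ℝ) ^ κ * (2:ℝ) ^ (-κ) = 1 := by
        rw [← Real.rpow_add (by norm_num : (0:ℝ) < 2)]
        norm_num
      calc ‖x‖ ^ (-κ) = 2 ^ κ * (2 ^ (-κ) * ‖x‖ ^ (-κ)) := by
            rw [← mul_assoc, h3, one_mul]
        _ = 2 ^ κ * (2 * ‖x‖) ^ (-κ) := by rw [h2]
        _ ≤ 2 ^ κ * (1 + ‖x‖) ^ (-κ) :=
            mul_le_mul_of_nonneg_left h1 (Real.rpow_nonneg (by norm_num) _)
    have h2b : (0:ℝ) ≤ β * 2 ^ (β + 1) := by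
      have := Real.rpow_nonneg (by norm_num : (0:ℝ) ≤ 2) (β + 1)
      positivity
    calc ‖A x‖ ≤ D * Cf := le_trans hstep1 (le_trans hstep2 hstep3)
      _ = β * 2 ^ (β + 1) * ‖x‖ ^ (-κ) * Cf := by rw [hDval]
      _ ≤ β * 2 ^ (β + 1) * (2 ^ κ * (1 + ‖x‖) ^ (-κ)) * Cf := by
          apply mul_le_mul_of_nonneg_right _ hCf0
          exact mul_le_mul_of_nonneg_left hjap h2b
      _ = G x := by rw [hGdef, hCdef]; ring
  -- `G` belongs to `L^p`
  have hGmem : MemLp G (ENNReal.ofReal p) := by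
    have hfr : ((Module.finrank ℝ (EuclideanSpace ℝ (Fin n)) : ℝ)) < κ * p := by
      rw [show Module.finrank ℝ (EuclideanSpace ℝ (Fin n)) = n from finrank_euclideanSpace_fin]
      exact hκp
    have hint : Integrable (fun x : EuclideanSpace ℝ (Fin n) => (1 + ‖x‖) ^ (-(κ * p))) :=
      integrable_one_add_norm hfr
    have hg : MemLp (fun x : EuclideanSpace ℝ (Fin n) => (1 + ‖x‖) ^ (-κ)) (ENNReal.ofReal p) := by
      constructor
      · exact ((measurable_const.add measurable_norm).pow
          measurable_const).aestronglyMeasurable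
      · have h0 : (fun x : EuclideanSpace ℝ (Fin n) => (1 + ‖x‖) ^ (-κ))
            = fun x => ‖(1 + ‖x‖) ^ (-(κ * p))‖ ^ (1 / p) := by
          funext x
          have hx1 : (0:ℝ) ≤ 1 + ‖x‖ := by positivity
          rw [Real.norm_eq_abs, abs_of_nonneg (Real.rpow_nonneg hx1 _),
            ← Real.rpow_mul hx1]
          congr 1
          field_simp
        rw [h0, eLpNorm_norm_rpow _ (by positivity : (0:ℝ) < 1 / p)]
        have hmul : ENNReal.ofReal p * ENNReal.ofReal (1 / p) = 1 := by
          rw [← ENNReal.ofReal_mul hp0.le, mul_one_div, div_self hp0.ne']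
          simp
        rw [hmul]
        have h1 : eLpNorm (fun x : EuclideanSpace ℝ (Fin n) => (1 + ‖x‖) ^ (-(κ * p))) 1 volume < ⊤ :=
          (memLp_one_iff_integrable.2 hint).2
        exact ENNReal.rpow_lt_top_of_nonneg (by positivity) h1.ne
    exact hg.const_mul C
  -- conclude
  refine MemLp.of_le hGmem ((hAm.indicator hSR).aestronglyMeasurable) (ae_of_all _ fun x => ?_)
  by_cases hx : R ≤ ‖x‖
  · rw [Set.indicator_of_mem (by exact hx : x ∈ {x : EuclideanSpace ℝ (Fin n) | R ≤ ‖x‖})]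
    exact le_trans (hbound x hx) (le_abs_self _)
  · rw [Set.indicator_of_notMem (by exact hx : x ∉ {x : EuclideanSpace ℝ (Fin n) | R ≤ ‖x‖})]
    simp only [norm_zero]
    exact norm_nonneg _

/-- Proposition 4 of the paper: let `n ≥ 3`, `β = n - 2`, `0 < η < 1`
and `F ∈ L¹(ℝⁿ)`.  With `Ω₂(x) = {y : |x-y| > 1, |y| ≤ |x|^η}`, there is an `R ≥ 1`
such that `h(x) = (∫_{Ω₂(x)} |x-y|^{-β} F(y) dy - |x|^{-β} ∫_{Ω₂(x)} F(y) dy) · 𝟙_{|x| ≥ R}`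
belongs to `L^p(ℝⁿ)` for every `p > n/(n - 1 - η)`. -/
theorem riesz_potential_near_region_replacement
    (n : ℕ) (hn : 3 ≤ n) (η : ℝ) (hη0 : 0 < η) (hη1 : η < 1)
    (F : EuclideanSpace ℝ (Fin n) → ℝ) (hF : Integrable F) :
    ∃ R : ℝ, 1 ≤ R ∧
      ∀ p : ℝ, (n : ℝ) / ((n : ℝ) - 1 - η) < p →
        MemLp
          ({x : EuclideanSpace ℝ (Fin n) | R ≤ ‖x‖}.indicator fun x =>
            (∫ y in {y : EuclideanSpace ℝ (Fin n) | 1 < ‖x - y‖ ∧ ‖y‖ ≤ ‖x‖ ^ η},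
                ‖x - y‖ ^ (-((n : ℝ) - 2)) * F y) -
              ‖x‖ ^ (-((n : ℝ) - 2)) *
                ∫ y in {y : EuclideanSpace ℝ (Fin n) | 1 < ‖x - y‖ ∧ ‖y‖ ≤ ‖x‖ ^ η}, F y)
          (ENNReal.ofReal p) := by
  classical
  obtain ⟨F', hF'm, hFF'⟩ : ∃ F' : EuclideanSpace ℝ (Fin n) → ℝ,
      StronglyMeasurable F' ∧ F =ᵐ[volume] F' :=
    ⟨hF.1.mk F, hF.1.stronglyMeasurable_mk, hF.1.ae_eq_mk⟩
  have hF'int : Integrable F' := hF.congr hFF'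
  obtain ⟨R, hR1, hmem⟩ := riesz_aux n hn η hη0 hη1 F' hF'm hF'int
  refine ⟨R, hR1, fun p hp => ?_⟩
  have h₁ : ∀ x : EuclideanSpace ℝ (Fin n),
      (∫ y in {y : EuclideanSpace ℝ (Fin n) | 1 < ‖x - y‖ ∧ ‖y‖ ≤ ‖x‖ ^ η},
          ‖x - y‖ ^ (-((n : ℝ) - 2)) * F y)
        = ∫ y in {y : EuclideanSpace ℝ (Fin n) | 1 < ‖x - y‖ ∧ ‖y‖ ≤ ‖x‖ ^ η},
            ‖x - y‖ ^ (-((n : ℝ) - 2)) * F' y := fun x =>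
    integral_congr_ae (ae_restrict_of_ae (hFF'.mono fun y hy => by dsimp only; rw [hy]))
  have h₂ : ∀ x : EuclideanSpace ℝ (Fin n),
      (∫ y in {y : EuclideanSpace ℝ (Fin n) | 1 < ‖x - y‖ ∧ ‖y‖ ≤ ‖x‖ ^ η}, F y)
        = ∫ y in {y : EuclideanSpace ℝ (Fin n) | 1 < ‖x - y‖ ∧ ‖y‖ ≤ ‖x‖ ^ η}, F' y := fun x =>
    integral_congr_ae (ae_restrict_of_ae hFF')
  have heq : ({x : EuclideanSpace ℝ (Fin n) | R ≤ ‖x‖}.indicator fun x =>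
      (∫ y in {y : EuclideanSpace ℝ (Fin n) | 1 < ‖x - y‖ ∧ ‖y‖ ≤ ‖x‖ ^ η},
          ‖x - y‖ ^ (-((n : ℝ) - 2)) * F y) -
        ‖x‖ ^ (-((n : ℝ) - 2)) *
          ∫ y in {y : EuclideanSpace ℝ (Fin n) | 1 < ‖x - y‖ ∧ ‖y‖ ≤ ‖x‖ ^ η}, F y)
      = ({x : EuclideanSpace ℝ (Fin n) | R ≤ ‖x‖}.indicator fun x =>
      (∫ y in {y : EuclideanSpace ℝ (Fin n) | 1 < ‖x - y‖ ∧ ‖y‖ ≤ ‖x‖ ^ η},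
          ‖x - y‖ ^ (-((n : ℝ) - 2)) * F' y) -
        ‖x‖ ^ (-((n : ℝ) - 2)) *
          ∫ y in {y : EuclideanSpace ℝ (Fin n) | 1 < ‖x - y‖ ∧ ‖y‖ ≤ ‖x‖ ^ η}, F' y) := by
    have : (fun x : EuclideanSpace ℝ (Fin n) =>
        (∫ y in {y : EuclideanSpace ℝ (Fin n) | 1 < ‖x - y‖ ∧ ‖y‖ ≤ ‖x‖ ^ η},
            ‖x - y‖ ^ (-((n : ℝ) - 2)) * F y) -
          ‖x‖ ^ (-((n : ℝ) - 2)) *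
            ∫ y in {y : EuclideanSpace ℝ (Fin n) | 1 < ‖x - y‖ ∧ ‖y‖ ≤ ‖x‖ ^ η}, F y)
        = (fun x : EuclideanSpace ℝ (Fin n) =>
        (∫ y in {y : EuclideanSpace ℝ (Fin n) | 1 < ‖x - y‖ ∧ ‖y‖ ≤ ‖x‖ ^ η},
            ‖x - y‖ ^ (-((n : ℝ) - 2)) * F' y) -
          ‖x‖ ^ (-((n : ℝ) - 2)) *
            ∫ y in {y : EuclideanSpace ℝ (Fin n) | 1 < ‖x - y‖ ∧ ‖y‖ ≤ ‖x‖ ^ η}, F' y) :=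
      funext fun x => by rw [h₁ x, h₂ x]
    rw [this]
  rw [heq]
  exact hmem p hp
end

section
/- Let n ≥ 3 and β = n − 2, let γ > 0 and 0 < η < 1, and let F : ℝⁿ → ℝ be measurable such that y ↦ (1+|y|)^γ F(y) is integrable. For x ∈ ℝⁿ let Ω₂(x) = {y : |x−y| > 1 and |y| ≤ |x|^η}. Then there exists R ≥ 1 such that the function x ↦ 𝟙_{{|x| ≥ R}}(x) · |x|^{−β} ∫_{ℝⁿ \ Ω₂(x)} F(y) dy belongs to L^p(ℝⁿ) for every p > n/(n − 2 + ηγ). -/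
open MeasureTheory

private lemma memLp_one_add_norm_neg {n : ℕ} {s p : ℝ} (hp : 0 < p)
    (hsp : (n : ℝ) < s * p) :
    MemLp (fun x : EuclideanSpace ℝ (Fin n) => (1 + ‖x‖) ^ (-s)) (ENNReal.ofReal p) := by
  have hq0 : ENNReal.ofReal p ≠ 0 := by
    simp [ENNReal.ofReal_eq_zero, not_le, hp]
  have hqt : ENNReal.ofReal p ≠ ⊤ := ENNReal.ofReal_ne_top
  have hint : Integrable (fun x : EuclideanSpace ℝ (Fin n) => (1 + ‖x‖) ^ (-(s * p))) := by
    apply integrable_one_add_norm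
    rwa [finrank_euclideanSpace_fin]
  have hmeas : AEStronglyMeasurable
      (fun x : EuclideanSpace ℝ (Fin n) => (1 + ‖x‖) ^ (-s)) volume := by
    apply Measurable.aestronglyMeasurable
    fun_prop
  have key := (memLp_norm_rpow_iff (p := ENNReal.ofReal p) (q := ENNReal.ofReal p)
      hmeas hq0 hqt)
  rw [ENNReal.div_self hq0 hqt] at key
  refine key.mp ?_
  rw [memLp_one_iff_integrable]
  have heq : ∀ x : EuclideanSpace ℝ (Fin n),
      ‖(1 + ‖x‖) ^ (-s)‖ ^ (ENNReal.ofReal p).toReal = (1 + ‖x‖) ^ (-(s * p)) := by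
    intro x
    have h1 : (0:ℝ) ≤ 1 + ‖x‖ := by positivity
    rw [Real.norm_eq_abs, abs_of_nonneg (Real.rpow_nonneg h1 _),
      ENNReal.toReal_ofReal hp.le, ← Real.rpow_mul h1, neg_mul]
  simpa only [heq] using hint

/-- estimate (eq: small arguments in Lp) of the paper: let `n ≥ 3`,
`β = n - 2`, `γ > 0`, `0 < η < 1` and let `F` be measurable with `(1+|y|)^γ F(y) ∈ L¹(ℝⁿ)`.
With `Ω₂(x) = {y : |x-y| > 1, |y| ≤ |x|^η}`, there is `R ≥ 1` such that
`𝟙_{|x| ≥ R}(x) · |x|^{-β} ∫_{ℝⁿ \ Ω₂(x)} F(y) dy` belongs to `L^p(ℝⁿ)` for every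
`p > n/(n - 2 + ηγ)`. -/
theorem complement_Omega2_term_memLp
    (n : ℕ) (hn : 3 ≤ n) (γ η : ℝ) (hγ : 0 < γ) (hη0 : 0 < η) (hη1 : η < 1)
    (F : EuclideanSpace ℝ (Fin n) → ℝ) (hFmeas : Measurable F)
    (hF : Integrable (fun y : EuclideanSpace ℝ (Fin n) => (1 + ‖y‖) ^ γ * F y)) :
    ∃ R : ℝ, 1 ≤ R ∧
      ∀ p : ℝ, (n : ℝ) / ((n : ℝ) - 2 + η * γ) < p →
        MemLp
          ({x : EuclideanSpace ℝ (Fin n) | R ≤ ‖x‖}.indicator fun x =>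
            ‖x‖ ^ (-((n : ℝ) - 2)) *
              ∫ y in {y : EuclideanSpace ℝ (Fin n) | 1 < ‖x - y‖ ∧ ‖y‖ ≤ ‖x‖ ^ η}ᶜ, F y)
          (ENNReal.ofReal p) := by
  have hn3 : (3:ℝ) ≤ (n:ℝ) := by exact_mod_cast hn
  set s : ℝ := (n : ℝ) - 2 + η * γ with hs_def
  have hs_pos : 0 < s := by
    have : 0 < η * γ := mul_pos hη0 hγ
    simp only [hs_def]; linarith
  -- choice of R
  have h1η : 0 < 1 - η := by linarith
  set R : ℝ := max 2 (2 ^ ((1:ℝ) / (1 - η))) with hR_def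
  have hR2 : (2:ℝ) ≤ R := le_max_left _ _
  have hR1 : (1:ℝ) ≤ R := by linarith
  -- key property of R : for t ≥ R, t ^ η ≤ t - 1
  have hRkey : ∀ t : ℝ, R ≤ t → t ^ η ≤ t - 1 := by
    intro t ht
    have ht2 : (2:ℝ) ≤ t := le_trans hR2 ht
    have ht0 : (0:ℝ) < t := by linarith
    have ht1 : (1:ℝ) ≤ t := by linarith
    have h2t : (2:ℝ) ≤ t ^ (1 - η) := by
      have hb : (2:ℝ) ^ ((1:ℝ) / (1 - η)) ≤ t := le_trans (le_max_right _ _) ht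
      have h22 : ((2:ℝ) ^ ((1:ℝ) / (1 - η))) ^ (1 - η) = 2 := by
        rw [← Real.rpow_mul (by norm_num : (0:ℝ) ≤ 2), one_div,
          inv_mul_cancel₀ (ne_of_gt h1η), Real.rpow_one]
      calc (2:ℝ) = ((2:ℝ) ^ ((1:ℝ) / (1 - η))) ^ (1 - η) := h22.symm
        _ ≤ t ^ (1 - η) := Real.rpow_le_rpow (Real.rpow_nonneg (by norm_num) _) hb h1η.le
    have hsplit : t ^ η * t ^ (1 - η) = t := by
      rw [← Real.rpow_add ht0]; simp
    have hηle : t ^ η ≤ t / 2 := by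
      have h1 : t ^ η * 2 ≤ t ^ η * t ^ (1 - η) := by
        apply mul_le_mul_of_nonneg_left h2t (Real.rpow_nonneg ht0.le _)
      rw [hsplit] at h1
      linarith
    have : t / 2 ≤ t - 1 := by linarith
    linarith
  refine ⟨R, hR1, ?_⟩
  intro p hp
  have hnp : (0:ℝ) < (n:ℝ) := by linarith
  have hp0 : 0 < p := lt_trans (div_pos hnp hs_pos) hp
  have hsp : (n:ℝ) < s * p := by
    rw [div_lt_iff₀ hs_pos] at hp
    nlinarith
  -- integrability facts
  have hFabs : Integrable (fun y : EuclideanSpace ℝ (Fin n) => (1 + ‖y‖) ^ γ * |F y|) := by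
    have := hF.abs
    refine this.congr (ae_of_all _ fun y => ?_)
    show |(1 + ‖y‖) ^ γ * F y| = (1 + ‖y‖) ^ γ * |F y|
    rw [abs_mul, abs_of_nonneg (Real.rpow_nonneg (by positivity) _)]
  have hone_le : ∀ y : EuclideanSpace ℝ (Fin n), (1:ℝ) ≤ (1 + ‖y‖) ^ γ := fun y =>
    Real.one_le_rpow (by simpa using norm_nonneg y) hγ.le
  have hFint : Integrable F := by
    refine hFabs.mono hFmeas.aestronglyMeasurable (ae_of_all _ fun y => ?_)
    show ‖F y‖ ≤ ‖(1 + ‖y‖) ^ γ * |F y|‖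
    rw [Real.norm_eq_abs, Real.norm_eq_abs, abs_of_nonneg (by positivity : (0:ℝ) ≤ (1 + ‖y‖) ^ γ * |F y|)]
    calc |F y| = 1 * |F y| := (one_mul _).symm
      _ ≤ (1 + ‖y‖) ^ γ * |F y| :=
        mul_le_mul_of_nonneg_right (hone_le y) (abs_nonneg _)
  set C : ℝ := ∫ y : EuclideanSpace ℝ (Fin n), (1 + ‖y‖) ^ γ * |F y| with hC_def
  have hC0 : 0 ≤ C := integral_nonneg fun y => by positivity
  -- measurability of the function
  have hSmeas : ∀ x : EuclideanSpace ℝ (Fin n), MeasurableSet {y : EuclideanSpace ℝ (Fin n) | 1 < ‖x - y‖ ∧ ‖y‖ ≤ ‖x‖ ^ η}ᶜ := by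
    intro x
    have hm1 : Measurable (fun y : EuclideanSpace ℝ (Fin n) => ‖x - y‖) := by fun_prop
    have hm2 : Measurable (fun y : EuclideanSpace ℝ (Fin n) => ‖y‖) := by fun_prop
    exact ((measurableSet_lt measurable_const hm1).inter
      (measurableSet_le hm2 measurable_const)).compl
  have hφmeas : StronglyMeasurable
      (fun x : EuclideanSpace ℝ (Fin n) => ∫ y in {y : EuclideanSpace ℝ (Fin n) | 1 < ‖x - y‖ ∧ ‖y‖ ≤ ‖x‖ ^ η}ᶜ, F y) := by
    have hK : MeasurableSet {q : EuclideanSpace ℝ (Fin n) × EuclideanSpace ℝ (Fin n) | 1 < ‖q.1 - q.2‖ ∧ ‖q.2‖ ≤ ‖q.1‖ ^ η}ᶜ := by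
      have hm1 : Measurable (fun q : EuclideanSpace ℝ (Fin n) × EuclideanSpace ℝ (Fin n) => ‖q.1 - q.2‖) := by fun_prop
      have hm2 : Measurable (fun q : EuclideanSpace ℝ (Fin n) × EuclideanSpace ℝ (Fin n) => ‖q.2‖) := by fun_prop
      have hm3 : Measurable (fun q : EuclideanSpace ℝ (Fin n) × EuclideanSpace ℝ (Fin n) => ‖q.1‖ ^ η) := by fun_prop
      exact ((measurableSet_lt measurable_const hm1).inter
        (measurableSet_le hm2 hm3)).compl
    have hind : StronglyMeasurable
        (({q : EuclideanSpace ℝ (Fin n) × EuclideanSpace ℝ (Fin n) | 1 < ‖q.1 - q.2‖ ∧ ‖q.2‖ ≤ ‖q.1‖ ^ η}ᶜ).indicator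
          (fun q : EuclideanSpace ℝ (Fin n) × EuclideanSpace ℝ (Fin n) => F q.2)) :=
      ((hFmeas.comp measurable_snd).indicator hK).stronglyMeasurable
    have := hind.integral_prod_right' (ν := (volume : Measure (EuclideanSpace ℝ (Fin n))))
    have hfun : (fun x : EuclideanSpace ℝ (Fin n) =>
        ∫ y in {y : EuclideanSpace ℝ (Fin n) | 1 < ‖x - y‖ ∧ ‖y‖ ≤ ‖x‖ ^ η}ᶜ, F y) =
        fun x => ∫ y : EuclideanSpace ℝ (Fin n),
          ({q : EuclideanSpace ℝ (Fin n) × EuclideanSpace ℝ (Fin n) |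
            1 < ‖q.1 - q.2‖ ∧ ‖q.2‖ ≤ ‖q.1‖ ^ η}ᶜ).indicator
            (fun q : EuclideanSpace ℝ (Fin n) × EuclideanSpace ℝ (Fin n) => F q.2) (x, y) := by
      funext x
      rw [← integral_indicator (hSmeas x)]
      apply integral_congr_ae
      filter_upwards with y
      simp only [Set.indicator_apply, Set.mem_compl_iff, Set.mem_setOf_eq]
    rw [hfun]
    exact this
  have hfmeas : AEStronglyMeasurable
      (({x : EuclideanSpace ℝ (Fin n) | R ≤ ‖x‖}.indicator fun x =>
        ‖x‖ ^ (-((n : ℝ) - 2)) *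
          ∫ y in {y : EuclideanSpace ℝ (Fin n) | 1 < ‖x - y‖ ∧ ‖y‖ ≤ ‖x‖ ^ η}ᶜ, F y)) volume := by
    have hm1 : Measurable (fun x : EuclideanSpace ℝ (Fin n) => ‖x‖ ^ (-((n : ℝ) - 2))) := by fun_prop
    have hm2 : Measurable (fun x : EuclideanSpace ℝ (Fin n) => ‖x‖) := by fun_prop
    apply AEStronglyMeasurable.indicator
    · exact (hm1.mul hφmeas.measurable).aestronglyMeasurable
    · exact measurableSet_le measurable_const hm2
  -- the dominating function
  have hG : MemLp (fun x : EuclideanSpace ℝ (Fin n) => (C * 2 ^ s) * ((1 + ‖x‖) ^ (-s))) (ENNReal.ofReal p) :=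
    (memLp_one_add_norm_neg hp0 hsp).const_mul _
  refine hG.of_le hfmeas (ae_of_all _ fun x => ?_)
  rw [Set.indicator_apply]
  by_cases hx : x ∈ {x : EuclideanSpace ℝ (Fin n) | R ≤ ‖x‖}
  · simp only [if_pos hx]
    have hxR : R ≤ ‖x‖ := hx
    have hx2 : (2:ℝ) ≤ ‖x‖ := le_trans hR2 hxR
    have hx0 : (0:ℝ) < ‖x‖ := by linarith
    have hx1 : (1:ℝ) ≤ ‖x‖ := by linarith
    -- inclusion of the complement set
    have hsub : {y : EuclideanSpace ℝ (Fin n) | 1 < ‖x - y‖ ∧ ‖y‖ ≤ ‖x‖ ^ η}ᶜ ⊆ {y : EuclideanSpace ℝ (Fin n) | ‖x‖ ^ η ≤ ‖y‖} := by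
      intro y hy
      simp only [Set.mem_compl_iff, Set.mem_setOf_eq, not_and, not_le, not_lt] at hy
      by_cases h1 : 1 < ‖x - y‖
      · exact le_of_lt (hy h1)
      · push_neg at h1
        have hxy : ‖x‖ - ‖y‖ ≤ ‖x - y‖ := by
          have := norm_sub_norm_le x y
          linarith [abs_le.mp (abs_norm_sub_norm_le x y)]
        have : ‖x‖ - 1 ≤ ‖y‖ := by linarith
        have := hRkey ‖x‖ hxR
        simp only [Set.mem_setOf_eq]
        linarith
    have hT : MeasurableSet {y : EuclideanSpace ℝ (Fin n) | ‖x‖ ^ η ≤ ‖y‖} :=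
      measurableSet_le measurable_const (by fun_prop : Measurable (fun y : EuclideanSpace ℝ (Fin n) => ‖y‖))
    -- bound for the integral
    have hb1 : |∫ y in {y : EuclideanSpace ℝ (Fin n) | 1 < ‖x - y‖ ∧ ‖y‖ ≤ ‖x‖ ^ η}ᶜ, F y|
        ≤ ∫ y in {y : EuclideanSpace ℝ (Fin n) | 1 < ‖x - y‖ ∧ ‖y‖ ≤ ‖x‖ ^ η}ᶜ, |F y| := by
      simpa [Real.norm_eq_abs] using
        norm_integral_le_integral_norm (μ := volume.restrict
          {y : EuclideanSpace ℝ (Fin n) | 1 < ‖x - y‖ ∧ ‖y‖ ≤ ‖x‖ ^ η}ᶜ) F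
    have hb2 : ∫ y in {y : EuclideanSpace ℝ (Fin n) | 1 < ‖x - y‖ ∧ ‖y‖ ≤ ‖x‖ ^ η}ᶜ, |F y|
        ≤ ∫ y in {y : EuclideanSpace ℝ (Fin n) | ‖x‖ ^ η ≤ ‖y‖}, |F y| := by
      apply setIntegral_mono_set hFint.abs.integrableOn
        (ae_of_all _ fun y => abs_nonneg _)
      exact HasSubset.Subset.eventuallyLE hsub
    have hb3 : ∫ y in {y : EuclideanSpace ℝ (Fin n) | ‖x‖ ^ η ≤ ‖y‖}, |F y|
        ≤ ∫ y in {y : EuclideanSpace ℝ (Fin n) | ‖x‖ ^ η ≤ ‖y‖}, ‖x‖ ^ (-(η * γ)) * ((1 + ‖y‖) ^ γ * |F y|) := by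
      apply setIntegral_mono_on hFint.abs.integrableOn
        ((hFabs.const_mul _).integrableOn) hT
      intro y hy
      simp only [Set.mem_setOf_eq] at hy
      have h1 : ‖x‖ ^ (η * γ) ≤ (1 + ‖y‖) ^ γ := by
        rw [Real.rpow_mul hx0.le]
        apply Real.rpow_le_rpow (Real.rpow_nonneg hx0.le _) _ hγ.le
        have : (0:ℝ) ≤ ‖y‖ := norm_nonneg _
        linarith
      have h2 : (1:ℝ) ≤ ‖x‖ ^ (-(η * γ)) * (1 + ‖y‖) ^ γ := by
        have h3 : ‖x‖ ^ (-(η * γ)) * ‖x‖ ^ (η * γ) = 1 := by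
          rw [← Real.rpow_add hx0]; simp
        calc (1:ℝ) = ‖x‖ ^ (-(η * γ)) * ‖x‖ ^ (η * γ) := h3.symm
          _ ≤ ‖x‖ ^ (-(η * γ)) * (1 + ‖y‖) ^ γ :=
            mul_le_mul_of_nonneg_left h1 (Real.rpow_nonneg hx0.le _)
      calc |F y| = 1 * |F y| := (one_mul _).symm
        _ ≤ (‖x‖ ^ (-(η * γ)) * (1 + ‖y‖) ^ γ) * |F y| :=
          mul_le_mul_of_nonneg_right h2 (abs_nonneg _)
        _ = ‖x‖ ^ (-(η * γ)) * ((1 + ‖y‖) ^ γ * |F y|) := by ring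
    have hb4 : ∫ y in {y : EuclideanSpace ℝ (Fin n) | ‖x‖ ^ η ≤ ‖y‖}, ‖x‖ ^ (-(η * γ)) * ((1 + ‖y‖) ^ γ * |F y|)
        ≤ ‖x‖ ^ (-(η * γ)) * C := by
      rw [integral_const_mul]
      apply mul_le_mul_of_nonneg_left _ (Real.rpow_nonneg hx0.le _)
      exact setIntegral_le_integral hFabs (ae_of_all _ fun y => by positivity)
    have hbound : |∫ y in {y : EuclideanSpace ℝ (Fin n) | 1 < ‖x - y‖ ∧ ‖y‖ ≤ ‖x‖ ^ η}ᶜ, F y|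
        ≤ ‖x‖ ^ (-(η * γ)) * C := le_trans hb1 (le_trans hb2 (le_trans hb3 hb4))
    -- now assemble
    rw [Real.norm_eq_abs, Real.norm_eq_abs, abs_mul,
      abs_of_nonneg (Real.rpow_nonneg (norm_nonneg x) _)]
    have step1 : ‖x‖ ^ (-((n:ℝ) - 2)) *
        |∫ y in {y : EuclideanSpace ℝ (Fin n) | 1 < ‖x - y‖ ∧ ‖y‖ ≤ ‖x‖ ^ η}ᶜ, F y|
        ≤ C * ‖x‖ ^ (-s) := by
      calc ‖x‖ ^ (-((n:ℝ) - 2)) * |∫ y in {y : EuclideanSpace ℝ (Fin n) | 1 < ‖x - y‖ ∧ ‖y‖ ≤ ‖x‖ ^ η}ᶜ, F y|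
          ≤ ‖x‖ ^ (-((n:ℝ) - 2)) * (‖x‖ ^ (-(η * γ)) * C) :=
            mul_le_mul_of_nonneg_left hbound (Real.rpow_nonneg (norm_nonneg x) _)
        _ = C * ‖x‖ ^ (-s) := by
            rw [← mul_assoc, ← Real.rpow_add hx0]
            rw [hs_def]
            ring_nf
    have step2 : C * ‖x‖ ^ (-s) ≤ C * 2 ^ s * (1 + ‖x‖) ^ (-s) := by
      have ha : (0:ℝ) < ‖x‖ ^ s := Real.rpow_pos_of_pos hx0 s
      have hbpos : (0:ℝ) < (1 + ‖x‖) ^ s := Real.rpow_pos_of_pos (by linarith) s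
      have hba : (1 + ‖x‖) ^ s ≤ 2 ^ s * ‖x‖ ^ s := by
        rw [← Real.mul_rpow (by norm_num) hx0.le]
        apply Real.rpow_le_rpow (by linarith) (by linarith) hs_pos.le
      have hinv : ‖x‖ ^ (-s) ≤ 2 ^ s * (1 + ‖x‖) ^ (-s) := by
        rw [Real.rpow_neg hx0.le, Real.rpow_neg (by linarith : (0:ℝ) ≤ 1 + ‖x‖)]
        have h2s : (0:ℝ) < (2:ℝ) ^ s := Real.rpow_pos_of_pos (by norm_num) s
        have hstep : ((2:ℝ) ^ s * ‖x‖ ^ s)⁻¹ ≤ ((1 + ‖x‖) ^ s)⁻¹ :=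
          inv_anti₀ hbpos hba
        have heq : (‖x‖ ^ s)⁻¹ = 2 ^ s * ((2:ℝ) ^ s * ‖x‖ ^ s)⁻¹ := by
          field_simp
        rw [heq]
        exact mul_le_mul_of_nonneg_left hstep h2s.le
      calc C * ‖x‖ ^ (-s) ≤ C * (2 ^ s * (1 + ‖x‖) ^ (-s)) :=
          mul_le_mul_of_nonneg_left hinv hC0
        _ = C * 2 ^ s * (1 + ‖x‖) ^ (-s) := by ring
    calc ‖x‖ ^ (-((n:ℝ) - 2)) * |∫ y in {y : EuclideanSpace ℝ (Fin n) | 1 < ‖x - y‖ ∧ ‖y‖ ≤ ‖x‖ ^ η}ᶜ, F y|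
        ≤ C * 2 ^ s * (1 + ‖x‖) ^ (-s) := le_trans step1 step2
      _ ≤ ‖(C * 2 ^ s) * ((1 + ‖x‖) ^ (-s))‖ := by
          rw [Real.norm_eq_abs]
          exact le_abs_self _
  · simp only [if_neg hx, norm_zero]
    positivity
end

section
/- Let d ≥ 3 and k ≥ 1 be integers, let E be a real inner product space of dimension d + k with its Lebesgue (Haar) measure, let F ⊆ E be a d-dimensional subspace and P the orthogonal projection onto F. Let c, ν, A > 0 with ν < d/2 − 1, let V : F → ℝ be measurable with |V(q)| ≤ c|q|^{−2−ν} for all q ∈ F with |q| ≥ A, and let 0 < γ < ν. Then for every real α with α > (d+k)/2 − 1 − (ν − γ), the function x ↦ (1+|x|)^{−α+γ}(1+|Px|) V(Px) · 𝟙_{{|Px| ≥ A}}(x) belongs to L²(E). -/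
open MeasureTheory
open scoped ENNReal NNReal

set_option maxHeartbeats 1000000 in
/-- the far-region `L²` estimate in the proof of Proposition 1 of the
paper: `E` a real inner product space of dimension `d + k` (`d ≥ 3`, `k ≥ 1`) with Haar
measure `μ`, `F` a `d`-dimensional subspace with orthogonal projection `P`,
`|V(q)| ≤ c|q|^{-2-ν}` for `|q| ≥ A` with `0 < ν < d/2 - 1`, and `0 < γ < ν`.  Then for
every `α > (d+k)/2 - 1 - (ν - γ)` the function
`(1+|x|)^{-α+γ}(1+|Px|) V(Px) 𝟙_{|Px| ≥ A}` belongs to `L²(E)`. -/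
theorem far_region_L2_estimate
    {E : Type*} [NormedAddCommGroup E] [InnerProductSpace ℝ E]
    [FiniteDimensional ℝ E] [MeasurableSpace E] [BorelSpace E]
    (d k : ℕ) (hd : 3 ≤ d) (hk : 1 ≤ k) (hdim : Module.finrank ℝ E = d + k)
    (F : Submodule ℝ E) (hF : Module.finrank ℝ F = d)
    (μ : Measure E) [μ.IsAddHaarMeasure]
    (c ν A : ℝ) (hc : 0 < c) (hν : 0 < ν) (hνd : ν < (d : ℝ) / 2 - 1) (hA : 0 < A)
    (V : F → ℝ) (hVmeas : Measurable V)
    (hVdecay : ∀ q : F, A ≤ ‖q‖ → |V q| ≤ c * ‖q‖ ^ (-(2 + ν)))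
    (γ : ℝ) (hγ0 : 0 < γ) (hγν : γ < ν) :
    ∀ α : ℝ, ((d : ℝ) + (k : ℝ)) / 2 - 1 - (ν - γ) < α →
      MemLp
        ({x : E | A ≤ ‖(Submodule.orthogonalProjectionOnto F x : E)‖}.indicator fun x =>
          (1 + ‖x‖) ^ (-α + γ) * (1 + ‖(Submodule.orthogonalProjectionOnto F x : E)‖) *
            V (Submodule.orthogonalProjectionOnto F x))
        2 μ := by
  intro α hα
  -- exponents
  set ε : ℝ := (α - γ - (((d : ℝ) + (k : ℝ)) / 2 - 1 - ν)) / 2 with hεdef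
  have hε : 0 < ε := by
    have : ((d : ℝ) + (k : ℝ)) / 2 - 1 - ν + γ < α := by linarith
    simp only [hεdef]; linarith
  set s : ℝ := (d : ℝ) / 2 + ε with hsdef
  set t : ℝ := (k : ℝ) / 2 + ε with htdef
  have hb0 : (0 : ℝ) < s - 1 - ν := by simp only [hsdef]; linarith
  have ht0 : (0 : ℝ) < t := by
    have : (0:ℝ) ≤ (k:ℝ) := Nat.cast_nonneg k
    simp only [htdef]; linarith
  have hsum : -α + γ = -t + -(s - 1 - ν) := by
    simp only [hsdef, htdef, hεdef]; ring
  -- constant and dominating function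
  set M : ℝ := c * ((1 + A) / A) ^ (2 + ν) with hMdef
  have hM : 0 < M := by
    have : (0:ℝ) < ((1 + A) / A) ^ (2 + ν) := Real.rpow_pos_of_pos (by positivity) _
    positivity
  set h : E → ℝ := fun x =>
    M * (1 + ‖(Submodule.orthogonalProjectionOnto F x : E)‖) ^ (-s) *
      (1 + ‖x - (Submodule.orthogonalProjectionOnto F x : E)‖) ^ (-t) with hhdef
  have hPcont : Continuous fun x : E => ((Submodule.orthogonalProjectionOnto F x : E)) :=
    continuous_subtype_val.comp (Submodule.orthogonalProjectionOnto F).continuous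
  have hhcont : Continuous h := by
    apply Continuous.mul
    · apply Continuous.mul continuous_const
      exact (continuous_const.add hPcont.norm).rpow_const fun x => Or.inl (by simp only [Pi.add_apply]; positivity)
    · exact (continuous_const.add (continuous_id.sub hPcont).norm).rpow_const
        fun x => Or.inl (by simp only [Pi.add_apply]; positivity)
  have hh0 : ∀ x, 0 ≤ h x := by
    intro x
    have h1 : (0:ℝ) ≤ (1 + ‖(Submodule.orthogonalProjectionOnto F x : E)‖) ^ (-s) :=
      Real.rpow_nonneg (by positivity) _
    have h2 : (0:ℝ) ≤ (1 + ‖x - (Submodule.orthogonalProjectionOnto F x : E)‖) ^ (-t) :=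
      Real.rpow_nonneg (by positivity) _
    positivity
  -- pointwise bound
  have key : ∀ x : E,
      |({x : E | A ≤ ‖(Submodule.orthogonalProjectionOnto F x : E)‖}.indicator fun x =>
          (1 + ‖x‖) ^ (-α + γ) * (1 + ‖(Submodule.orthogonalProjectionOnto F x : E)‖) *
            V (Submodule.orthogonalProjectionOnto F x)) x| ≤ h x := by
    intro x
    by_cases hx : A ≤ ‖(Submodule.orthogonalProjectionOnto F x : E)‖
    · rw [Set.indicator_of_mem (show x ∈ {x : E | A ≤ ‖(Submodule.orthogonalProjectionOnto F x : E)‖} from hx)]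
      set q : E := (Submodule.orthogonalProjectionOnto F x : E) with hqdef
      set ξ : E := x - q with hξdef
      have hq0 : 0 < ‖q‖ := lt_of_lt_of_le hA hx
      have h1q : (0:ℝ) < 1 + ‖q‖ := by positivity
      have h1ξ : (0:ℝ) < 1 + ‖ξ‖ := by positivity
      have h1x : (0:ℝ) < 1 + ‖x‖ := by positivity
      have hqx : ‖q‖ ≤ ‖x‖ := by
        calc ‖q‖ = ‖Submodule.orthogonalProjectionOnto F x‖ := rfl
        _ ≤ ‖Submodule.orthogonalProjectionOnto F‖ * ‖x‖ := (Submodule.orthogonalProjectionOnto F).le_opNorm x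
        _ ≤ 1 * ‖x‖ := by
            exact mul_le_mul_of_nonneg_right (Submodule.orthogonalProjectionOnto_norm_le F) (norm_nonneg x)
        _ = ‖x‖ := one_mul _
      have hξx : ‖ξ‖ ≤ ‖x‖ := by
        have hξ' : ξ = (Submodule.orthogonalProjectionOnto Fᗮ x : E) := by
          rw [Submodule.orthogonalProjectionOnto_orthogonal]; rfl
        rw [hξ']
        calc ‖(Submodule.orthogonalProjectionOnto Fᗮ x : E)‖ = ‖Submodule.orthogonalProjectionOnto Fᗮ x‖ := rfl
        _ ≤ ‖Submodule.orthogonalProjectionOnto Fᗮ‖ * ‖x‖ := (Submodule.orthogonalProjectionOnto Fᗮ).le_opNorm x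
        _ ≤ 1 * ‖x‖ := by
            exact mul_le_mul_of_nonneg_right (Submodule.orthogonalProjectionOnto_norm_le Fᗮ) (norm_nonneg x)
        _ = ‖x‖ := one_mul _
      -- step 1
      have step1 : (1 + ‖x‖) ^ (-α + γ) ≤ (1 + ‖ξ‖) ^ (-t) * (1 + ‖q‖) ^ (-(s - 1 - ν)) := by
        rw [hsum, Real.rpow_add h1x]
        exact mul_le_mul
          (Real.rpow_le_rpow_of_nonpos h1ξ (by linarith) (by linarith))
          (Real.rpow_le_rpow_of_nonpos h1q (by linarith) (by linarith))
          (Real.rpow_nonneg h1x.le _) (Real.rpow_nonneg h1ξ.le _)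
      -- step 2
      have hV1 : |V (Submodule.orthogonalProjectionOnto F x)| ≤ c * ‖q‖ ^ (-(2 + ν)) := hVdecay _ hx
      have hV2 : ‖q‖ ^ (-(2 + ν)) ≤ ((1 + A) / A) ^ (2 + ν) * (1 + ‖q‖) ^ (-(2 + ν)) := by
        have base : ‖q‖⁻¹ ≤ (1 + A) / A * (1 + ‖q‖)⁻¹ := by
          have hA' : A ≠ 0 := hA.ne'
          have h1q' : (1 + ‖q‖) ≠ 0 := h1q.ne'
          have hpos : (0:ℝ) < A * (1 + ‖q‖) := by positivity
          rw [show (1 + A) / A * (1 + ‖q‖)⁻¹ = (1 + A) / (A * (1 + ‖q‖)) by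
              field_simp,
            inv_eq_one_div, div_le_div_iff₀ hq0 hpos]
          nlinarith
        calc ‖q‖ ^ (-(2 + ν)) = (‖q‖⁻¹) ^ (2 + ν) := by
              rw [Real.rpow_neg hq0.le, ← Real.inv_rpow hq0.le]
        _ ≤ ((1 + A) / A * (1 + ‖q‖)⁻¹) ^ (2 + ν) :=
              Real.rpow_le_rpow (inv_nonneg.2 hq0.le) base (by linarith)
        _ = ((1 + A) / A) ^ (2 + ν) * (1 + ‖q‖) ^ (-(2 + ν)) := by
              rw [Real.mul_rpow (by positivity) (by positivity),
                Real.inv_rpow h1q.le, ← Real.rpow_neg h1q.le]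
      -- combine
      have comb : (1 + ‖q‖) ^ (-(s - 1 - ν)) * ((1 + ‖q‖) * (1 + ‖q‖) ^ (-(2 + ν)))
          = (1 + ‖q‖) ^ (-s) := by
        nth_rewrite 2 [← Real.rpow_one (1 + ‖q‖)]
        rw [← Real.rpow_add h1q, ← Real.rpow_add h1q]
        congr 1; ring
      rw [abs_mul, abs_mul]
      have e1 : |(1 + ‖x‖) ^ (-α + γ)| = (1 + ‖x‖) ^ (-α + γ) :=
        abs_of_nonneg (Real.rpow_nonneg h1x.le _)
      have e2 : |1 + ‖q‖| = 1 + ‖q‖ := abs_of_pos h1q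
      rw [e1, e2]
      calc (1 + ‖x‖) ^ (-α + γ) * (1 + ‖q‖) * |V (Submodule.orthogonalProjectionOnto F x)|
          ≤ ((1 + ‖ξ‖) ^ (-t) * (1 + ‖q‖) ^ (-(s - 1 - ν))) * (1 + ‖q‖) *
            (c * (((1 + A) / A) ^ (2 + ν) * (1 + ‖q‖) ^ (-(2 + ν)))) := by
            apply mul_le_mul
            · exact mul_le_mul_of_nonneg_right step1 h1q.le
            · calc |V (Submodule.orthogonalProjectionOnto F x)| ≤ c * ‖q‖ ^ (-(2 + ν)) := hV1
              _ ≤ c * (((1 + A) / A) ^ (2 + ν) * (1 + ‖q‖) ^ (-(2 + ν))) :=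
                  mul_le_mul_of_nonneg_left hV2 hc.le
            · exact abs_nonneg _
            · positivity
      _ = M * ((1 + ‖q‖) ^ (-(s - 1 - ν)) * ((1 + ‖q‖) * (1 + ‖q‖) ^ (-(2 + ν)))) *
            (1 + ‖ξ‖) ^ (-t) := by rw [hMdef]; ring
      _ = h x := by rw [comb, hhdef]
    · rw [Set.indicator_of_notMem (show x ∉ {x : E | A ≤ ‖(Submodule.orthogonalProjectionOnto F x : E)‖} from hx), abs_zero]
      exact hh0 x
  -- measurability of the function itself
  have hPmeasF : Measurable fun x : E => Submodule.orthogonalProjectionOnto F x :=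
    (Submodule.orthogonalProjectionOnto F).continuous.measurable
  have hSmeas : MeasurableSet {x : E | A ≤ ‖(Submodule.orthogonalProjectionOnto F x : E)‖} :=
    measurableSet_le measurable_const hPcont.norm.measurable
  have hfmeas : AEStronglyMeasurable
      ({x : E | A ≤ ‖(Submodule.orthogonalProjectionOnto F x : E)‖}.indicator fun x =>
          (1 + ‖x‖) ^ (-α + γ) * (1 + ‖(Submodule.orthogonalProjectionOnto F x : E)‖) *
            V (Submodule.orthogonalProjectionOnto F x)) μ := by
    apply Measurable.aestronglyMeasurable
    apply Measurable.indicator _ hSmeas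
    apply Measurable.mul
    · apply Measurable.mul
      · exact ((continuous_const.add continuous_norm).rpow_const
          fun x => Or.inl (by simp only [Pi.add_apply]; positivity)).measurable
      · exact (continuous_const.add hPcont.norm).measurable
    · exact hVmeas.comp hPmeasF
  -- the dominating function is in L²
  have hFc : Module.finrank ℝ ↥Fᗮ = k := by
    have h1 := Submodule.finrank_add_finrank_orthogonal F
    rw [hF, hdim] at h1; omega
  set b₁ : OrthonormalBasis (Fin d) ℝ F := (stdOrthonormalBasis ℝ F).reindex (finCongr hF)
    with hb₁def
  set b₂ : OrthonormalBasis (Fin k) ℝ Fᗮ := (stdOrthonormalBasis ℝ ↥Fᗮ).reindex (finCongr hFc)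
    with hb₂def
  set e₁ : EuclideanSpace ℝ (Fin d) ≃ₗᵢ[ℝ] F := b₁.repr.symm with he₁def
  set e₂ : EuclideanSpace ℝ (Fin k) ≃ₗᵢ[ℝ] ↥Fᗮ := b₂.repr.symm with he₂def
  set L : (EuclideanSpace ℝ (Fin d) × EuclideanSpace ℝ (Fin k)) ≃ₗ[ℝ] E :=
    (e₁.toLinearEquiv.prodCongr e₂.toLinearEquiv).trans
      (F.prodEquivOfIsCompl Fᗮ F.isCompl_orthogonal) with hLdef
  have hLapp : ∀ p : EuclideanSpace ℝ (Fin d) × EuclideanSpace ℝ (Fin k),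
      L p = (e₁ p.1 : E) + (e₂ p.2 : E) := by
    intro p
    simp only [hLdef, LinearEquiv.trans_apply, LinearEquiv.prodCongr_apply,
      LinearIsometryEquiv.coe_toLinearEquiv]
    rfl
  have hPL : ∀ p : EuclideanSpace ℝ (Fin d) × EuclideanSpace ℝ (Fin k),
      Submodule.orthogonalProjectionOnto F (L p) = e₁ p.1 := by
    intro p
    rw [hLapp, map_add, Submodule.orthogonalProjectionOnto_mem_subspace_eq_self,
      Submodule.orthogonalProjectionOnto_apply_of_mem_orthogonal (SetLike.coe_mem _),
      add_zero]
  have hLcont : Continuous L := L.toLinearMap.continuous_of_finiteDimensional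
  set ν₀ : Measure (EuclideanSpace ℝ (Fin d) × EuclideanSpace ℝ (Fin k)) :=
    (volume : Measure (EuclideanSpace ℝ (Fin d))).prod
      (volume : Measure (EuclideanSpace ℝ (Fin k))) with hν₀def
  haveI : Measure.IsAddHaarMeasure ν₀ := Measure.prod.instIsAddHaarMeasure _ _
  set μ' : Measure E := ν₀.map L with hμ'def
  haveI : Measure.IsAddHaarMeasure μ' := Measure.MapLinearEquiv.isAddHaarMeasure ν₀ L
  have hcomp : (h ∘ L) = fun p : EuclideanSpace ℝ (Fin d) × EuclideanSpace ℝ (Fin k) =>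
      M * (1 + ‖p.1‖) ^ (-s) * (1 + ‖p.2‖) ^ (-t) := by
    funext p
    have h1 : ‖(Submodule.orthogonalProjectionOnto F (L p) : E)‖ = ‖p.1‖ := by
      rw [hPL]
      calc ‖(e₁ p.1 : E)‖ = ‖e₁ p.1‖ := rfl
      _ = ‖p.1‖ := e₁.norm_map p.1
    have h2 : L p - (Submodule.orthogonalProjectionOnto F (L p) : E) = (e₂ p.2 : E) := by
      rw [hPL, hLapp]; abel
    simp only [Function.comp_apply, hhdef, h1, h2]
    rw [show ‖(e₂ p.2 : E)‖ = ‖p.2‖ from e₂.norm_map p.2]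
  have hmem₀ : MemLp (fun p : EuclideanSpace ℝ (Fin d) × EuclideanSpace ℝ (Fin k) =>
      M * (1 + ‖p.1‖) ^ (-s) * (1 + ‖p.2‖) ^ (-t)) 2 ν₀ := by
    have hcont : Continuous (fun p : EuclideanSpace ℝ (Fin d) × EuclideanSpace ℝ (Fin k) =>
        M * (1 + ‖p.1‖) ^ (-s) * (1 + ‖p.2‖) ^ (-t)) := by
      apply Continuous.mul
      · exact continuous_const.mul ((continuous_const.add continuous_fst.norm).rpow_const
          fun x => Or.inl (by simp only [Pi.add_apply]; positivity))
      · exact (continuous_const.add continuous_snd.norm).rpow_const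
          fun x => Or.inl (by simp only [Pi.add_apply]; positivity)
    rw [memLp_two_iff_integrable_sq hcont.aestronglyMeasurable]
    have heq : (fun p : EuclideanSpace ℝ (Fin d) × EuclideanSpace ℝ (Fin k) =>
        (M * (1 + ‖p.1‖) ^ (-s) * (1 + ‖p.2‖) ^ (-t)) ^ 2)
        = fun p => M ^ 2 * ((1 + ‖p.1‖) ^ (-(2 * s)) * (1 + ‖p.2‖) ^ (-(2 * t))) := by
      funext p
      have hp1 : (0:ℝ) ≤ 1 + ‖p.1‖ := by positivity
      have hp2 : (0:ℝ) ≤ 1 + ‖p.2‖ := by positivity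
      rw [mul_pow, mul_pow, ← Real.rpow_natCast ((1 + ‖p.1‖) ^ (-s)) 2,
        ← Real.rpow_natCast ((1 + ‖p.2‖) ^ (-t)) 2,
        ← Real.rpow_mul hp1, ← Real.rpow_mul hp2]
      norm_num
      ring
    rw [heq]
    have hd2 : (Module.finrank ℝ (EuclideanSpace ℝ (Fin d)) : ℝ) < 2 * s := by
      rw [finrank_euclideanSpace_fin]
      simp only [hsdef]; linarith
    have hk2 : (Module.finrank ℝ (EuclideanSpace ℝ (Fin k)) : ℝ) < 2 * t := by
      rw [finrank_euclideanSpace_fin]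
      simp only [htdef]; linarith
    exact ((integrable_one_add_norm hd2).mul_prod (integrable_one_add_norm hk2)).const_mul _
  have hmem' : MemLp h 2 μ' := by
    rw [hμ'def, memLp_map_measure_iff hhcont.aestronglyMeasurable
      hLcont.measurable.aemeasurable]
    rw [hcomp]
    exact hmem₀
  have hμeq : μ = Measure.addHaarScalarFactor μ μ' • μ' :=
    Measure.isAddLeftInvariant_eq_smul μ μ'
  have hmemh : MemLp h 2 μ := by
    rw [hμeq]
    have := hmem'.smul_measure (c := ((Measure.addHaarScalarFactor μ μ' : ℝ≥0) : ℝ≥0∞))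
      ENNReal.coe_ne_top
    exact this
  exact hmemh.of_le hfmeas (Filter.Eventually.of_forall fun x => by
    rw [Real.norm_eq_abs, Real.norm_eq_abs, abs_of_nonneg (hh0 x)]
    exact key x)
end

section
/- Let d ≥ 1 and k ≥ 1 be integers, let E be a real inner product space of dimension d + k with its Lebesgue (Haar) measure, let F ⊆ E be a d-dimensional subspace and P the orthogonal projection onto F. Let A > 0, let V : F → ℝ be measurable such that q ↦ (1+|q|)V(q)·𝟙_{{|q| < A}}(q) belongs to L²(F), and let α, γ be reals with α − γ > k/2. Then the function x ↦ (1+|x|)^{−α+γ}(1+|Px|) V(Px) · 𝟙_{{|Px| < A}}(x) belongs to L²(E). -/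
open MeasureTheory RealInnerProductSpace

section Aux

variable {X Y : Type*} [MeasurableSpace X] [MeasurableSpace Y]

lemma aux_memℒp_prod_mul (μ : Measure X) (ν : Measure Y) [SigmaFinite μ] [SigmaFinite ν]
    {f : X → ℝ} {g : Y → ℝ} (hf : MemLp f 2 μ) (hg : MemLp g 2 ν) :
    MemLp (fun z : X × Y => f z.1 * g z.2) 2 (μ.prod ν) := by
  have hfm : AEStronglyMeasurable (fun z : X × Y => f z.1) (μ.prod ν) := hf.1.comp_fst
  have hgm : AEStronglyMeasurable (fun z : X × Y => g z.2) (μ.prod ν) := hg.1.comp_snd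
  have hmul : AEStronglyMeasurable (fun z : X × Y => f z.1 * g z.2) (μ.prod ν) := hfm.mul hgm
  rw [memLp_two_iff_integrable_sq hmul]
  have h1 := (memLp_two_iff_integrable_sq hf.1).1 hf
  have h2 := (memLp_two_iff_integrable_sq hg.1).1 hg
  have := h1.mul_prod h2
  refine this.congr ?_
  filter_upwards with z
  ring

end Aux

/-- the near-region `L²` estimate in the proof of Proposition 1 of the
paper: `E` a real inner product space of dimension `d + k` (`d, k ≥ 1`) with Haar
measure `μ`, `F` a `d`-dimensional subspace with orthogonal projection `P` and Haar
measure `μF`, and `V : F → ℝ` measurable with `(1+|q|)V(q)𝟙_{|q|<A} ∈ L²(F)`.  Then for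
all reals `α, γ` with `α - γ > k/2`, the function
`(1+|x|)^{-α+γ}(1+|Px|) V(Px) 𝟙_{|Px| < A}` belongs to `L²(E)`. -/
theorem near_region_L2_estimate
    {E : Type*} [NormedAddCommGroup E] [InnerProductSpace ℝ E]
    [FiniteDimensional ℝ E] [MeasurableSpace E] [BorelSpace E]
    (d k : ℕ) (hd : 1 ≤ d) (hk : 1 ≤ k) (hdim : Module.finrank ℝ E = d + k)
    (F : Submodule ℝ E) (hF : Module.finrank ℝ F = d)
    [MeasurableSpace F] [BorelSpace F]
    (μ : Measure E) [μ.IsAddHaarMeasure]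
    (μF : Measure F) [μF.IsAddHaarMeasure]
    (A : ℝ) (hA : 0 < A)
    (V : F → ℝ) (hVmeas : Measurable V)
    (hVloc : MemLp ({q : F | ‖q‖ < A}.indicator fun q => (1 + ‖q‖) * V q) 2 μF)
    (α γ : ℝ) (hαγ : (k : ℝ) / 2 < α - γ) :
    MemLp
      ({x : E | ‖(F.orthogonalProjectionOnto x : E)‖ < A}.indicator fun x =>
        (1 + ‖x‖) ^ (-α + γ) * (1 + ‖(F.orthogonalProjectionOnto x : E)‖) *
          V (F.orthogonalProjectionOnto x))
      2 μ := by
  classical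
  letI : MeasurableSpace ↥Fᗮ := borel _
  haveI : BorelSpace ↥Fᗮ := ⟨rfl⟩
  -- Haar measure on Fᗮ
  let μK : Measure ↥Fᗮ := (Module.finBasis ℝ ↥Fᗮ).addHaar
  haveI : μK.IsAddHaarMeasure := inferInstance
  have hK : Module.finrank ℝ ↥Fᗮ = k := by
    have h := Submodule.finrank_add_finrank_orthogonal (K := F)
    rw [hF, hdim] at h
    omega
  -- the isomorphism F × Fᗮ ≃ E
  have hcompl : IsCompl F Fᗮ := Submodule.isCompl_orthogonal_of_hasOrthogonalProjection
  let e0 : (↥F × ↥Fᗮ) ≃ₗ[ℝ] E := Submodule.prodEquivOfIsCompl F Fᗮ hcompl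
  let e : (↥F × ↥Fᗮ) ≃L[ℝ] E := e0.toContinuousLinearEquiv
  have he_apply : ∀ z : ↥F × ↥Fᗮ, e z = (z.1 : E) + (z.2 : E) := fun z => rfl
  -- the target function and its measurability
  set f : E → ℝ := ({x : E | ‖(F.orthogonalProjectionOnto x : E)‖ < A}.indicator fun x =>
    (1 + ‖x‖) ^ (-α + γ) * (1 + ‖(F.orthogonalProjectionOnto x : E)‖) *
      V (F.orthogonalProjectionOnto x)) with hf_def
  have hP : Measurable fun x : E => F.orthogonalProjectionOnto x :=
    F.orthogonalProjectionOnto.continuous.measurable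
  have hcont1 : Continuous fun x : E => (1 + ‖x‖) ^ (-α + γ) :=
    Continuous.rpow_const (continuous_const.add continuous_norm) (fun x => Or.inl (by positivity))
  have hfmeas : Measurable f := by
    apply Measurable.indicator
    · exact (hcont1.measurable.mul (hP.norm.const_add 1)).mul (hVmeas.comp hP)
    · exact measurableSet_lt hP.norm measurable_const
  -- reduce to the product measure via uniqueness of Haar measures
  set ν : Measure E := (μF.prod μK).map e with hν_def
  haveI : ν.IsAddHaarMeasure := e.isAddHaarMeasure_map _
  have hμν : μ = Measure.addHaarScalarFactor μ ν • ν := Measure.isAddLeftInvariant_eq_smul μ ν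
  rw [hμν]
  apply MemLp.smul_measure _ (by simp)
  rw [hν_def, memLp_map_measure_iff (hfmeas.aestronglyMeasurable) e.continuous.measurable.aemeasurable]
  -- the composed function on the product
  have hproj : ∀ z : ↥F × ↥Fᗮ, F.orthogonalProjectionOnto (e z) = z.1 := by
    intro z
    rw [he_apply, map_add, Submodule.orthogonalProjectionOnto_mem_subspace_eq_self,
      Submodule.orthogonalProjectionOnto_apply_of_mem_orthogonal z.2.2, add_zero]
  -- dominating function
  set W : ↥F → ℝ := ({q : ↥F | ‖q‖ < A}.indicator fun q => (1 + ‖q‖) * V q) with hW_def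
  have hu : MemLp (fun ξ : ↥Fᗮ => (1 + ‖ξ‖) ^ (γ - α)) 2 μK := by
    have hmeas : AEStronglyMeasurable (fun ξ : ↥Fᗮ => (1 + ‖ξ‖) ^ (γ - α)) μK :=
      (Continuous.rpow_const (continuous_const.add continuous_norm) (fun x : ↥Fᗮ => Or.inl (show (1:ℝ) + ‖x‖ ≠ 0 by positivity))).measurable.aestronglyMeasurable
    rw [memLp_two_iff_integrable_sq hmeas]
    have hint : Integrable (fun ξ : ↥Fᗮ => (1 + ‖ξ‖) ^ (-(2 * (α - γ)))) μK := by
      apply integrable_one_add_norm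
      rw [hK]; linarith
    refine hint.congr ?_
    filter_upwards with ξ
    have h1 : (0:ℝ) ≤ 1 + ‖ξ‖ := by positivity
    rw [← Real.rpow_natCast (_ ^ (γ - α)) 2, ← Real.rpow_mul h1]
    congr 1
    push_cast; ring
  have hWu : MemLp (fun z : ↥F × ↥Fᗮ => W z.1 * (1 + ‖z.2‖) ^ (γ - α)) 2 (μF.prod μK) :=
    aux_memℒp_prod_mul μF μK hVloc hu
  -- compare
  refine hWu.of_le ?_ ?_
  · exact (hfmeas.comp e.continuous.measurable).aestronglyMeasurable
  · filter_upwards with z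
    obtain ⟨q, ξ⟩ := z
    have horth : ‖(ξ : E)‖ ≤ ‖e (q, ξ)‖ := by
      have hinner : inner ℝ (q : E) (ξ : E) = (0:ℝ) := ξ.2 q q.2
      have hsq : ‖(ξ : E)‖ ^ 2 ≤ ‖(q : E) + (ξ : E)‖ ^ 2 := by
        rw [norm_add_sq_real, hinner]
        have := sq_nonneg ‖(q : E)‖
        nlinarith [norm_nonneg (q : E)]
      rw [he_apply]
      have := Real.sqrt_le_sqrt hsq
      rwa [Real.sqrt_sq (norm_nonneg _), Real.sqrt_sq (norm_nonneg _)] at this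
    simp only [Function.comp_apply, hf_def, hW_def]
    rw [Set.indicator_apply, Set.indicator_apply]
    have hmem : (e (q, ξ) ∈ {x : E | ‖(F.orthogonalProjectionOnto x : E)‖ < A}) ↔ (q ∈ {q : ↥F | ‖q‖ < A}) := by
      simp only [Set.mem_setOf_eq, hproj (q, ξ)]
      rw [Submodule.norm_coe]
    by_cases hq : q ∈ {q : ↥F | ‖q‖ < A}
    · rw [if_pos (hmem.mpr hq), if_pos hq]
      rw [hproj (q, ξ)]
      have h1 : (0:ℝ) < 1 + ‖e (q, ξ)‖ := by positivity
      have h2 : (0:ℝ) < 1 + ‖ξ‖ := by positivity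
      have hrpow : (1 + ‖e (q, ξ)‖) ^ (-α + γ) ≤ (1 + ‖ξ‖) ^ (γ - α) := by
        have : -α + γ = γ - α := by ring
        rw [this]
        have hxi : ‖(ξ : E)‖ = ‖ξ‖ := rfl
        apply Real.rpow_le_rpow_of_nonpos h2 (by rw [← hxi]; linarith [horth])
          (by have : (0:ℝ) ≤ (k:ℝ) := Nat.cast_nonneg k; linarith)
      have hrnn : (0:ℝ) ≤ (1 + ‖e (q, ξ)‖) ^ (-α + γ) := Real.rpow_nonneg h1.le _
      have hrnn2 : (0:ℝ) ≤ (1 + ‖ξ‖) ^ (γ - α) := Real.rpow_nonneg h2.le _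
      have hcoe : ‖(q : E)‖ = ‖q‖ := Submodule.norm_coe q
      simp only [Real.norm_eq_abs, abs_mul, hcoe]
      rw [abs_of_nonneg hrnn, abs_of_nonneg hrnn2,
        abs_of_nonneg (by positivity : (0:ℝ) ≤ 1 + ‖q‖)]
      calc (1 + ‖e (q, ξ)‖) ^ (-α + γ) * (1 + ‖q‖) * |V q|
          ≤ (1 + ‖ξ‖) ^ (γ - α) * (1 + ‖q‖) * |V q| := by
            apply mul_le_mul_of_nonneg_right _ (abs_nonneg _)
            exact mul_le_mul_of_nonneg_right hrpow (by positivity)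
        _ = (1 + ‖q‖) * |V q| * (1 + ‖ξ‖) ^ (γ - α) := by ring
    · rw [if_neg (fun h => hq (hmem.mp h)), if_neg hq]
      simp
end
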